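/- arXiv:1709.01963 — 3 statements merged into one kernel-verified Lean document; each statement's English description precedes it below -/
import Mathlib

section
/- Let A > 1. (i) For every real σ > 1/2 there exists a constant c_{A,σ} such that for every prime power q, every integer n ≥ 2 and every z ∈ ℂ with |z| ≤ A, Σ_{0≤a≤n} |B_z(a)|·q^{−σa} ≤ c_{A,σ}. (ii) There exists a constant c_A such that for every prime power q, every n ≥ 2 and every |z| ≤ A, Σ_{0≤a≤n} |B_z(a)|·q^{−a/2} ≤ n^{c_A}. (iii) There exists a constant C_A such that for every prime power q and every |z| ≤ A, Σ_{a≥0} |B_z(a)|·q^{−a}·a^{2A+2} ≤ C_A. -/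
open Polynomial UniqueFactorizationMonoid
open scoped Classical

noncomputable section

/-- `cbinom w n = (1/n!)·∏_{j=0}^{n-1} (w - j)`, the generalized binomial coefficient. -/
def cbinom (w : ℂ) (n : ℕ) : ℂ :=
  (∏ j ∈ Finset.range n, (w - (j : ℂ))) / (Nat.factorial n : ℂ)

/-- `bcoef z k`: the coefficient of `S^k` in `(1 + zS)·(1-S)^z`, using that the coefficient
of `S^k` in `(1-S)^z` is `(-1)^k·cbinom z k`. -/
def bcoef (z : ℂ) : ℕ → ℂ
  | 0 => 1
  | (k + 1) => z * ((-1 : ℂ) ^ k * cbinom z k) + (-1 : ℂ) ^ (k + 1) * cbinom z (k + 1)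

/-- `b_z`, the multiplicative function on monic polynomials whose values on powers of a monic
irreducible `p` are the power series coefficients of `(1 + zS)·(1-S)^z`. -/
def bzf {F : Type} [Field F] (z : ℂ) (f : Polynomial F) : ℂ :=
  ∏ p ∈ (normalizedFactors f).toFinset,
    bcoef z (Multiset.count p (normalizedFactors f))

/-- `B_z(n) = Σ_{f monic, deg f = n} b_z(f)`. -/
def Bz (F : Type) [Field F] (z : ℂ) (n : ℕ) : ℂ :=
  ∑ᶠ f ∈ {f : Polynomial F | f.Monic ∧ f.natDegree = n}, bzf z f

/-- the complex absolute value, as an absolute value (removed from Mathlib) -/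
def Complex.abs : AbsoluteValue ℂ ℝ := NormedField.toAbsoluteValue ℂ

lemma Complex.abs_natCast (n : ℕ) : Complex.abs (n : ℂ) = n := by
  show ‖(n : ℂ)‖ = n
  simp

namespace BzAux

lemma bcoef_zero (z : ℂ) : bcoef z 0 = 1 := rfl

lemma cbinom_zero (z : ℂ) : cbinom z 0 = 1 := by simp [cbinom]

lemma cbinom_one (z : ℂ) : cbinom z 1 = z := by simp [cbinom]

lemma bcoef_one (z : ℂ) : bcoef z 1 = 0 := by
  simp [bcoef, cbinom_zero, cbinom_one]

lemma cbinom_succ (z : ℂ) (k : ℕ) :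
    cbinom z (k + 1) = cbinom z k * (z - k) / (k + 1) := by
  rw [cbinom, cbinom, Finset.prod_range_succ, Nat.factorial_succ]
  push_cast
  field_simp

/-- The key bound `|cbinom z k| ≤ (k+1)^m` whenever `|z| ≤ m`. -/
lemma abs_cbinom_le {z : ℂ} {m : ℕ} (hm : 1 ≤ m) (hz : Complex.abs z ≤ m) (k : ℕ) :
    Complex.abs (cbinom z k) ≤ ((k : ℝ) + 1) ^ m := by
  induction k with
  | zero => simp [cbinom_zero]
  | succ k ih =>
    have hk1 : (0:ℝ) < (k:ℝ) + 1 := by positivity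
    have goal' : Complex.abs (cbinom z (k+1)) ≤ ((k : ℝ) + 2) ^ m := by
      rw [cbinom_succ, map_div₀, map_mul]
      have habsk : Complex.abs ((k : ℂ) + 1) = (k : ℝ) + 1 := by
        rw [show ((k : ℂ) + 1) = ((k + 1 : ℕ) : ℂ) by push_cast; ring, Complex.abs_natCast]
        push_cast; ring
      rw [habsk, div_le_iff₀ hk1]
      have habs : Complex.abs (z - k) ≤ (m : ℝ) + k := by
        calc Complex.abs (z - k) ≤ Complex.abs z + Complex.abs (k : ℂ) := by
              simpa [sub_eq_add_neg] using (Complex.abs.add_le z (-(k:ℂ)))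
          _ ≤ (m : ℝ) + k := by
              simp only [Complex.abs_natCast]
              linarith
      have h1 : Complex.abs (cbinom z k) * Complex.abs (z - k) ≤
          ((k : ℝ) + 1) ^ m * ((m : ℝ) + k) := by
        apply mul_le_mul ih habs (Complex.abs.nonneg _) (by positivity)
      refine h1.trans ?_
      have bern : ((k : ℝ) + 1 + m) / ((k:ℝ)+1) ≤ (((k:ℝ)+2) / ((k:ℝ)+1)) ^ m := by
        have hnn : (0:ℝ) ≤ 1/((k:ℝ)+1) := by positivity
        have h := one_add_mul_le_pow (a := (1:ℝ)/((k:ℝ)+1)) (by linarith) m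
        have e1 : (1:ℝ) + m * (1/((k:ℝ)+1)) = ((k:ℝ)+1+m)/((k:ℝ)+1) := by field_simp
        have e2 : (1:ℝ) + 1/((k:ℝ)+1) = ((k:ℝ)+2)/((k:ℝ)+1) := by field_simp; ring
        rw [e1, e2] at h
        exact h
      have e3 : ((k : ℝ) + 1) ^ m * ((((k:ℝ)+2) / ((k:ℝ)+1)) ^ m) = ((k:ℝ)+2)^m := by
        rw [div_pow, ← mul_div_assoc, mul_comm, mul_div_assoc, div_self (by positivity)]
        ring
      calc ((k : ℝ) + 1) ^ m * ((m : ℝ) + k)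
          ≤ ((k : ℝ) + 1) ^ m * ((k:ℝ)+1+m) := by
            apply mul_le_mul_of_nonneg_left (by linarith) (by positivity)
        _ = ((k : ℝ) + 1) ^ m * (((k:ℝ)+1+m)/((k:ℝ)+1)) * ((k:ℝ)+1) := by
            field_simp
        _ ≤ ((k : ℝ) + 1) ^ m * ((((k:ℝ)+2) / ((k:ℝ)+1)) ^ m) * ((k:ℝ)+1) := by
            apply mul_le_mul_of_nonneg_right _ (by positivity)
            exact mul_le_mul_of_nonneg_left bern (by positivity)
        _ = ((k:ℝ)+2)^m * ((k:ℝ)+1) := by rw [e3]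
    refine goal'.trans (le_of_eq (by push_cast; ring))

lemma abs_bcoef_le {z : ℂ} {m : ℕ} (hm : 1 ≤ m) (hz : Complex.abs z ≤ m) (k : ℕ) :
    Complex.abs (bcoef z k) ≤ ((m : ℝ) + 1) * ((k : ℝ) + 2) ^ m := by
  have hm1 : (1:ℝ) ≤ (m:ℝ) := by exact_mod_cast hm
  cases k with
  | zero =>
    have h2 : (1:ℝ) ≤ ((0:ℝ)+2)^m := one_le_pow₀ (by norm_num)
    simp only [bcoef_zero, map_one, Nat.cast_zero]
    nlinarith
  | succ k =>
    rw [bcoef.eq_2]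
    have h1 := abs_cbinom_le hm hz k
    have h1' := abs_cbinom_le hm hz (k+1)
    have key : Complex.abs (z * ((-1 : ℂ) ^ k * cbinom z k) + (-1 : ℂ) ^ (k + 1) * cbinom z (k + 1))
        ≤ ((m : ℝ) + 1) * (((k:ℝ)+1) + 2) ^ m := by
      calc Complex.abs (z * ((-1 : ℂ) ^ k * cbinom z k) + (-1 : ℂ) ^ (k + 1) * cbinom z (k + 1))
          ≤ Complex.abs (z * ((-1 : ℂ) ^ k * cbinom z k)) +
              Complex.abs ((-1 : ℂ) ^ (k + 1) * cbinom z (k + 1)) := Complex.abs.add_le _ _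
        _ = Complex.abs z * Complex.abs (cbinom z k) + Complex.abs (cbinom z (k+1)) := by
            simp [map_mul, map_pow]
        _ ≤ (m:ℝ) * ((k:ℝ)+1)^m + ((k:ℝ)+2)^m := by
            push_cast at h1'
            have h1'' := h1'.trans (le_of_eq (by ring : ((k:ℝ)+1+1)^m = ((k:ℝ)+2)^m))
            have := mul_le_mul hz h1 (Complex.abs.nonneg _) (Nat.cast_nonneg m)
            linarith
        _ ≤ (m:ℝ) * ((k:ℝ)+3)^m + ((k:ℝ)+3)^m := by
            have e1 : ((k:ℝ)+1)^m ≤ ((k:ℝ)+3)^m :=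
              pow_le_pow_left₀ (by positivity) (by linarith) m
            have e2 : ((k:ℝ)+2)^m ≤ ((k:ℝ)+3)^m :=
              pow_le_pow_left₀ (by positivity) (by linarith) m
            nlinarith
        _ = ((m : ℝ) + 1) * (((k:ℝ)+1) + 2) ^ m := by ring_nf
    refine key.trans (le_of_eq (by push_cast; ring))


lemma finite_of_natDegree_le (F : Type) [Field F] [Fintype F] (N : ℕ)
    (s : Set (Polynomial F)) (hs : ∀ f ∈ s, f.natDegree ≤ N) : s.Finite := by
  have hfin : Finite (Polynomial.degreeLT F (N+1)) :=
    Finite.of_equiv _ (Polynomial.degreeLTEquiv F (N+1)).toEquiv.symm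
  have h : ((Polynomial.degreeLT F (N+1) : Submodule F (Polynomial F)) :
      Set (Polynomial F)).Finite := Set.toFinite _
  refine h.subset fun f hf => ?_
  rw [SetLike.mem_coe, Polynomial.mem_degreeLT]
  have hd : f.natDegree ≤ N := hs f hf
  calc degree f ≤ (f.natDegree : WithBot ℕ) := Polynomial.degree_le_natDegree
    _ < ((N+1 : ℕ) : WithBot ℕ) := by exact_mod_cast Nat.lt_succ_of_le hd

/-- monic polynomials of degree exactly `a`, as a `Finset`. -/
def Mdeg (F : Type) [Field F] [Fintype F] (a : ℕ) : Finset (Polynomial F) :=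
  (finite_of_natDegree_le F a {f | f.Monic ∧ f.natDegree = a}
    (fun _ hf => le_of_eq hf.2)).toFinset

/-- monic polynomials of degree at most `N`, as a `Finset`. -/
def MLe (F : Type) [Field F] [Fintype F] (N : ℕ) : Finset (Polynomial F) :=
  (finite_of_natDegree_le F N {f | f.Monic ∧ f.natDegree ≤ N}
    (fun _ hf => hf.2)).toFinset

/-- monic irreducible polynomials of degree at most `N`, as a `Finset`. -/
def Pset (F : Type) [Field F] [Fintype F] (N : ℕ) : Finset (Polynomial F) :=
  (finite_of_natDegree_le F N {p | p.Monic ∧ Irreducible p ∧ p.natDegree ≤ N}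
    (fun _ hf => hf.2.2)).toFinset

variable {F : Type} [Field F] [Fintype F]

lemma mem_Mdeg {a : ℕ} {f : Polynomial F} :
    f ∈ Mdeg F a ↔ f.Monic ∧ f.natDegree = a := by
  simp [Mdeg, Set.Finite.mem_toFinset]

lemma mem_MLe {N : ℕ} {f : Polynomial F} :
    f ∈ MLe F N ↔ f.Monic ∧ f.natDegree ≤ N := by
  simp [MLe, Set.Finite.mem_toFinset]

lemma mem_Pset {N : ℕ} {p : Polynomial F} :
    p ∈ Pset F N ↔ p.Monic ∧ Irreducible p ∧ p.natDegree ≤ N := by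
  simp [Pset, Set.Finite.mem_toFinset]

lemma Bz_eq_sum (z : ℂ) (a : ℕ) : Bz F z a = ∑ f ∈ Mdeg F a, bzf z f :=
  finsum_mem_eq_finite_toFinset_sum _ _

lemma mem_nf_monic {f p : Polynomial F} (hf : f.Monic) (hp : p ∈ normalizedFactors f) :
    p.Monic ∧ Irreducible p ∧ p.natDegree ≤ f.natDegree := by
  have hf0 : f ≠ 0 := hf.ne_zero
  have hirr : Irreducible p := irreducible_of_normalized_factor p hp
  have hnorm : normalize p = p := normalize_normalized_factor p hp
  have hmon : p.Monic := by
    rw [← hnorm]; exact Polynomial.monic_normalize hirr.ne_zero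
  exact ⟨hmon, hirr, Polynomial.natDegree_le_of_dvd (dvd_of_mem_normalizedFactors hp) hf0⟩

lemma nf_prod_monic {f : Polynomial F} (hf : f.Monic) : (normalizedFactors f).prod = f := by
  have h := prod_normalizedFactors hf.ne_zero
  refine Polynomial.eq_of_monic_of_associated ?_ hf h
  have := Polynomial.monic_multiset_prod_of_monic (normalizedFactors f) id
    (fun p hp => (mem_nf_monic hf hp).1)
  simpa using this

lemma natDegree_eq_sum_counts {f : Polynomial F} (hf : f.Monic) {P : Finset (Polynomial F)}
    (hP : (normalizedFactors f).toFinset ⊆ P) :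
    f.natDegree = ∑ p ∈ P, (normalizedFactors f).count p * p.natDegree := by
  conv_lhs => rw [← nf_prod_monic hf]
  rw [Polynomial.natDegree_multiset_prod_of_monic _ (fun p hp => (mem_nf_monic hf hp).1)]
  rw [Finset.sum_multiset_map_count]
  rw [Finset.sum_subset hP (fun p _ hnp => by
    rw [Multiset.count_eq_zero.2 (fun h => hnp (Multiset.mem_toFinset.2 h))]; simp)]
  simp [smul_eq_mul]

lemma eq_of_counts_eq {f g : Polynomial F} (hf : f.Monic) (hg : g.Monic)
    {P : Finset (Polynomial F)} (hPf : (normalizedFactors f).toFinset ⊆ P)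
    (hPg : (normalizedFactors g).toFinset ⊆ P)
    (h : ∀ p ∈ P, (normalizedFactors f).count p = (normalizedFactors g).count p) : f = g := by
  have hnf : normalizedFactors f = normalizedFactors g := by
    rw [Multiset.ext]
    intro p
    by_cases hp : p ∈ P
    · exact h p hp
    · rw [Multiset.count_eq_zero.2 (fun hm => hp (hPf (Multiset.mem_toFinset.2 hm))),
        Multiset.count_eq_zero.2 (fun hm => hp (hPg (Multiset.mem_toFinset.2 hm)))]
  rw [← nf_prod_monic hf, ← nf_prod_monic hg, hnf]

lemma abs_bzf_eq {f : Polynomial F} {P : Finset (Polynomial F)}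
    (hP : (normalizedFactors f).toFinset ⊆ P) (z : ℂ) :
    Complex.abs (bzf z f) =
      ∏ p ∈ P, Complex.abs (bcoef z ((normalizedFactors f).count p)) := by
  rw [bzf, map_prod]
  exact Finset.prod_subset hP (fun p _ hnp => by
    rw [Multiset.count_eq_zero.2 (fun h => hnp (Multiset.mem_toFinset.2 h))]
    simp [bcoef_zero])

lemma toFinset_nf_subset_Pset {N : ℕ} {f : Polynomial F} (hf : f.Monic)
    (hfN : f.natDegree ≤ N) : (normalizedFactors f).toFinset ⊆ Pset F N := by
  intro p hp
  have h := mem_nf_monic hf (Multiset.mem_toFinset.1 hp)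
  exact mem_Pset.2 ⟨h.1, h.2.1, h.2.2.trans hfN⟩

lemma count_le_of_natDegree_le {N : ℕ} {f : Polynomial F} (hf : f.Monic)
    (hfN : f.natDegree ≤ N) (p : Polynomial F) :
    (normalizedFactors f).count p ≤ N := by
  by_cases hp : p ∈ (normalizedFactors f).toFinset
  · have hdf := natDegree_eq_sum_counts hf (le_refl (normalizedFactors f).toFinset)
    have hdp : 0 < p.natDegree :=
      (mem_nf_monic hf (Multiset.mem_toFinset.1 hp)).2.1.natDegree_pos
    have hterm : (normalizedFactors f).count p * p.natDegree ≤ f.natDegree := by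
      rw [hdf]
      exact Finset.single_le_sum (f := fun q => Multiset.count q (normalizedFactors f) * q.natDegree) (fun q _ => Nat.zero_le _) hp
    calc (normalizedFactors f).count p ≤ (normalizedFactors f).count p * p.natDegree :=
          Nat.le_mul_of_pos_right _ hdp
      _ ≤ f.natDegree := hterm
      _ ≤ N := hfN
  · rw [Multiset.count_eq_zero.2 (fun h => hp (Multiset.mem_toFinset.2 h))]
    exact Nat.zero_le _

set_option maxHeartbeats 2000000 in
lemma expansion (N : ℕ) (z : ℂ) (u : ℝ) (hu : 0 ≤ u) :
    ∑ f ∈ MLe F N, Complex.abs (bzf z f) * u ^ f.natDegree ≤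
    ∏ p ∈ Pset F N, ∑ k ∈ Finset.range (N + 1),
      Complex.abs (bcoef z k) * u ^ (k * p.natDegree) := by
  classical
  set P := Pset F N with hPdef
  have hterm : ∀ f ∈ MLe F N, Complex.abs (bzf z f) * u ^ f.natDegree =
      ∏ p ∈ P, Complex.abs (bcoef z ((normalizedFactors f).count p)) *
        u ^ ((normalizedFactors f).count p * p.natDegree) := by
    intro f hf
    obtain ⟨hfm, hfN⟩ := mem_MLe.1 hf
    have hsub := toFinset_nf_subset_Pset hfm hfN
    rw [abs_bzf_eq hsub z, natDegree_eq_sum_counts hfm hsub,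
      ← Finset.prod_pow_eq_pow_sum, ← Finset.prod_mul_distrib]
  rw [Finset.sum_congr rfl hterm]
  set g : {x // x ∈ P} → ℕ → ℝ := fun p k =>
    Complex.abs (bcoef z k) * u ^ (k * (p : Polynomial F).natDegree) with hg
  set Φ : Polynomial F → ({x // x ∈ P} → ℕ) :=
    fun f p => (normalizedFactors f).count ↑p with hΦ
  have hattach : ∀ f : Polynomial F,
      (∏ p ∈ P, Complex.abs (bcoef z ((normalizedFactors f).count p)) *
        u ^ ((normalizedFactors f).count p * p.natDegree)) =
      ∏ p : {x // x ∈ P}, g p (Φ f p) := by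
    intro f
    exact (Finset.prod_coe_sort P (fun p => Complex.abs (bcoef z ((normalizedFactors f).count p)) *
        u ^ ((normalizedFactors f).count p * p.natDegree))).symm
  rw [Finset.sum_congr rfl (fun f _ => hattach f)]
  have hinj : ∀ f ∈ MLe F N, ∀ f' ∈ MLe F N, Φ f = Φ f' → f = f' := by
    intro f hf f' hf' he
    obtain ⟨hfm, hfN⟩ := mem_MLe.1 hf
    obtain ⟨hfm', hfN'⟩ := mem_MLe.1 hf'
    refine eq_of_counts_eq hfm hfm' (toFinset_nf_subset_Pset hfm hfN)
      (toFinset_nf_subset_Pset hfm' hfN') (fun p hp => ?_)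
    exact congrFun he ⟨p, hp⟩
  calc ∑ f ∈ MLe F N, ∏ p : {x // x ∈ P}, g p (Φ f p)
      = ∑ φ ∈ (MLe F N).image Φ, ∏ p : {x // x ∈ P}, g p (φ p) :=
        (Finset.sum_image (f := fun φ : {x // x ∈ P} → ℕ => ∏ p : {x // x ∈ P}, g p (φ p)) hinj).symm
    _ ≤ ∑ φ ∈ Fintype.piFinset (fun _ : {x // x ∈ P} => Finset.range (N+1)),
          ∏ p : {x // x ∈ P}, g p (φ p) := by
        apply Finset.sum_le_sum_of_subset_of_nonneg
        · intro φ hφ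
          obtain ⟨f, hf, rfl⟩ := Finset.mem_image.1 hφ
          obtain ⟨hfm, hfN⟩ := mem_MLe.1 hf
          rw [Fintype.mem_piFinset]
          intro p
          rw [Finset.mem_range]
          exact Nat.lt_succ_of_le (count_le_of_natDegree_le hfm hfN ↑p)
        · intro φ _ _
          exact Finset.prod_nonneg (fun p _ =>
            mul_nonneg (Complex.abs.nonneg _) (pow_nonneg hu _))
    _ = ∏ p : {x // x ∈ P}, ∑ k ∈ Finset.range (N+1), g p k :=
        (Finset.prod_univ_sum _ _).symm
    _ = ∏ p ∈ P, ∑ k ∈ Finset.range (N+1),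
          Complex.abs (bcoef z k) * u ^ (k * p.natDegree) := by
        exact Finset.prod_coe_sort P (fun p => ∑ k ∈ Finset.range (N+1),
          Complex.abs (bcoef z k) * u ^ (k * p.natDegree))

lemma card_irred_mul_le (d : ℕ) (hd : 1 ≤ d) (Q : Finset (Polynomial F))
    (hQ : ∀ p ∈ Q, p.Monic ∧ Irreducible p ∧ p.natDegree = d) :
    Q.card * d ≤ Fintype.card F ^ d := by
  classical
  set q := Fintype.card F with hq
  have hq2 : 1 < q := Fintype.one_lt_card
  have hqd : 1 < q ^ d := Nat.one_lt_pow (by omega) hq2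
  -- each p in Q divides X^(q^d) - X
  have hdvd : ∀ p ∈ Q, p ∣ (X ^ (q ^ d) - X : Polynomial F) := by
    intro p hp
    obtain ⟨hm, hirr, hdeg⟩ := hQ p hp
    haveI : Fact (Irreducible p) := ⟨hirr⟩
    let pb := AdjoinRoot.powerBasis' hm
    haveI : Finite (AdjoinRoot p) := Finite.of_equiv _ pb.basis.equivFun.toEquiv.symm
    haveI : Fintype (AdjoinRoot p) := Fintype.ofFinite _
    have hcard : Fintype.card (AdjoinRoot p) = q ^ d := by
      have hdim : pb.dim = d := by rw [show pb.dim = p.natDegree from rfl, hdeg]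
      rw [Module.card_eq_pow_finrank (K := F) (V := AdjoinRoot p), pb.finrank, hdim]
    have hroot : (AdjoinRoot.root p) ^ (q ^ d) = AdjoinRoot.root p := by
      rw [← hcard]
      exact FiniteField.pow_card _
    rw [← AdjoinRoot.mk_eq_zero]
    rw [map_sub, map_pow, AdjoinRoot.mk_X, sub_eq_zero]
    exact hroot
  have hprod_dvd : (∏ p ∈ Q, p) ∣ (X ^ (q ^ d) - X : Polynomial F) := by
    apply Finset.prod_dvd_of_coprime
    · intro p hp r hr hne
      simp only [Function.onFun]
      have hirr := (hQ p (by simpa using hp)).2.1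
      rw [hirr.coprime_iff_not_dvd]
      intro hdvd'
      apply hne
      have hass := hirr.associated_of_dvd (hQ r (by simpa using hr)).2.1 hdvd'
      exact Polynomial.eq_of_monic_of_associated (hQ p (by simpa using hp)).1
        (hQ r (by simpa using hr)).1 hass
    · intro p hp
      exact hdvd p hp
  have hne0 : (X ^ (q ^ d) - X : Polynomial F) ≠ 0 :=
    FiniteField.X_pow_card_sub_X_ne_zero _ hqd
  have hdegprod : (∏ p ∈ Q, p).natDegree = Q.card * d := by
    rw [Polynomial.natDegree_prod _ _ (fun p hp => (hQ p hp).2.1.ne_zero)]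
    rw [Finset.sum_congr rfl (fun p hp => (hQ p hp).2.2), Finset.sum_const, smul_eq_mul]
  calc Q.card * d = (∏ p ∈ Q, p).natDegree := hdegprod.symm
    _ ≤ (X ^ (q ^ d) - X : Polynomial F).natDegree :=
        Polynomial.natDegree_le_of_dvd hprod_dvd hne0
    _ = q ^ d := FiniteField.X_pow_card_sub_X_natDegree_eq _ hqd

/-- the tail constant `M_m = Σ_j (m+1)(j+4)^m r^j`, `r = 1/√2`. -/
def Mconst (m : ℕ) : ℝ :=
  ∑' j : ℕ, ((m:ℝ)+1) * ((j:ℝ)+4)^m * ((Real.sqrt 2)⁻¹)^j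

lemma sqrt2_inv_pos : (0:ℝ) < (Real.sqrt 2)⁻¹ := by
  rw [inv_pos]; exact Real.sqrt_pos.2 (by norm_num)

lemma sqrt2_inv_lt_one : (Real.sqrt 2)⁻¹ < 1 := by
  rw [inv_lt_one_iff₀]
  right
  have : (1:ℝ) < Real.sqrt 2 := by
    rw [show (1:ℝ) = Real.sqrt 1 from (Real.sqrt_one).symm]
    exact Real.sqrt_lt_sqrt (by norm_num) (by norm_num)
  exact this

lemma summable_Mconst (m : ℕ) :
    Summable (fun j : ℕ => ((m:ℝ)+1) * ((j:ℝ)+4)^m * ((Real.sqrt 2)⁻¹)^j) := by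
  set r := (Real.sqrt 2)⁻¹ with hr
  have hr0 : 0 < r := sqrt2_inv_pos
  have hr1 : r < 1 := sqrt2_inv_lt_one
  have h1 : Summable (fun j : ℕ => (j:ℝ)^m * r^j) := by
    have := summable_pow_mul_geometric_of_norm_lt_one (R := ℝ) m
      (r := r) (by rw [Real.norm_eq_abs, abs_of_pos hr0]; exact hr1)
    exact this
  have h2 : Summable (fun j : ℕ => (((j:ℕ)+4:ℝ))^m * r^(j+4)) := by
    have := (summable_nat_add_iff (f := fun j : ℕ => (j:ℝ)^m * r^j) 4).2 h1
    refine this.congr fun j => by push_cast; ring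
  have h3 : Summable (fun j : ℕ => ((m:ℝ)+1) * r⁻¹^4 * ((((j:ℕ)+4:ℝ))^m * r^(j+4))) :=
    h2.mul_left _
  refine h3.congr fun j => ?_
  field_simp
  ring

lemma Mconst_nonneg (m : ℕ) : 0 ≤ Mconst m := by
  apply tsum_nonneg
  intro j
  have := sqrt2_inv_pos
  positivity

lemma rpow_base_le {q : ℝ} (hq : 2 ≤ q) {x : ℝ} (hx : x ≤ 0) : q ^ x ≤ (2:ℝ) ^ x := by
  have h1 : (2:ℝ)^(-x) ≤ q^(-x) := Real.rpow_le_rpow (by norm_num) hq (by linarith)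
  have h2 : 0 < (2:ℝ)^(-x) := Real.rpow_pos_of_pos (by norm_num) _
  calc q^x = (q^(-x))⁻¹ := by rw [← Real.rpow_neg (by linarith : (0:ℝ) ≤ q), neg_neg]
    _ ≤ ((2:ℝ)^(-x))⁻¹ := by
        apply inv_anti₀ h2 h1
    _ = (2:ℝ)^x := by rw [← Real.rpow_neg (by norm_num : (0:ℝ) ≤ 2), neg_neg]

/-- The master estimate. -/
lemma master {m : ℕ} (hm : 1 ≤ m) {z : ℂ} (hz : Complex.abs z ≤ m) {σ : ℝ}
    (hσ : 1/2 ≤ σ) (N : ℕ) :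
    ∑ a ∈ Finset.range (N+1),
        Complex.abs (Bz F z a) * (Fintype.card F : ℝ) ^ (-(σ * (a:ℝ))) ≤
      Real.exp (Mconst m *
        ∑ d ∈ Finset.Icc 1 N, (Fintype.card F : ℝ) ^ ((1 - 2*σ) * (d:ℝ)) / (d:ℝ)) := by
  classical
  set q : ℝ := (Fintype.card F : ℝ) with hqdef
  have hq2 : (2:ℝ) ≤ q := by
    have h := Fintype.one_lt_card (α := F)
    have h2 : 2 ≤ Fintype.card F := h
    rw [hqdef]
    exact_mod_cast h2
  have hq0 : (0:ℝ) < q := by linarith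
  set u : ℝ := q ^ (-σ) with hudef
  have hu0 : 0 < u := Real.rpow_pos_of_pos hq0 _
  have hur : u ≤ (Real.sqrt 2)⁻¹ := by
    have h1 : u ≤ (2:ℝ) ^ (-σ) := rpow_base_le hq2 (by linarith)
    have h2 : (2:ℝ) ^ (-σ) ≤ (2:ℝ) ^ (-(1/2 : ℝ)) :=
      Real.rpow_le_rpow_of_exponent_le (by norm_num) (by linarith)
    have h3 : (2:ℝ) ^ (-(1/2:ℝ)) = (Real.sqrt 2)⁻¹ := by
      rw [Real.rpow_neg (by norm_num : (0:ℝ) ≤ 2), Real.sqrt_eq_rpow]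
    linarith [h1, h2.trans_eq h3]
  have hu1 : u < 1 := lt_of_le_of_lt hur sqrt2_inv_lt_one
  set r : ℝ := (Real.sqrt 2)⁻¹ with hrdef
  have hr0 : 0 < r := sqrt2_inv_pos
  -- Step 1: pointwise triangle inequality and u-power rewriting
  have hBz : ∀ a : ℕ, Complex.abs (Bz F z a) * q ^ (-(σ * (a:ℝ))) ≤
      (∑ f ∈ Mdeg F a, Complex.abs (bzf z f)) * u ^ a := by
    intro a
    have h1 : Complex.abs (Bz F z a) ≤ ∑ f ∈ Mdeg F a, Complex.abs (bzf z f) := by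
      rw [Bz_eq_sum]
      exact Complex.abs.sum_le _ _
    have h2 : q ^ (-(σ * (a:ℝ))) = u ^ a := by
      rw [hudef, ← Real.rpow_natCast (q ^ (-σ)) a, ← Real.rpow_mul hq0.le]
      ring_nf
    rw [h2]
    exact mul_le_mul_of_nonneg_right h1 (pow_nonneg hu0.le a)
  -- Step 2: regroup as a sum over MLe
  have hsplit : ∑ a ∈ Finset.range (N+1), (∑ f ∈ Mdeg F a, Complex.abs (bzf z f)) * u ^ a =
      ∑ f ∈ MLe F N, Complex.abs (bzf z f) * u ^ f.natDegree := by
    have hbi : MLe F N = (Finset.range (N+1)).biUnion (fun a => Mdeg F a) := by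
      ext f
      simp only [mem_MLe, Finset.mem_biUnion, Finset.mem_range, mem_Mdeg]
      constructor
      · rintro ⟨h1, h2⟩; exact ⟨f.natDegree, Nat.lt_succ_of_le h2, h1, rfl⟩
      · rintro ⟨a, ha, h1, rfl⟩; exact ⟨h1, Nat.lt_succ_iff.1 ha⟩
    rw [hbi, Finset.sum_biUnion]
    · apply Finset.sum_congr rfl
      intro a _
      rw [Finset.sum_mul]
      apply Finset.sum_congr rfl
      intro f hf
      rw [(mem_Mdeg.1 hf).2]
    · intro a _ b _ hab
      apply Finset.disjoint_left.2
      intro f hfa hfb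
      exact hab ((mem_Mdeg.1 hfa).2 ▸ (mem_Mdeg.1 hfb).2.symm ▸ rfl)
  -- Step 3/4: Euler-type expansion and exponential bound
  set E : ℕ → ℝ := fun d => ∑ k ∈ Finset.Ico 2 (N+1),
    Complex.abs (bcoef z k) * u ^ (k*d) with hEdef
  have hE_nonneg : ∀ d, 0 ≤ E d := fun d =>
    Finset.sum_nonneg fun k _ => mul_nonneg (Complex.abs.nonneg _) (pow_nonneg hu0.le _)
  have hinner : ∀ p : Polynomial F, p ∈ Pset F N →
      ∑ k ∈ Finset.range (N+1), Complex.abs (bcoef z k) * u ^ (k * p.natDegree) ≤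
        Real.exp (E p.natDegree) := by
    intro p _
    have h0 : Finset.range (N+1) = insert 0 (Finset.Ico 1 (N+1)) := by
      ext k
      simp only [Finset.mem_range, Finset.mem_insert, Finset.mem_Ico]
      omega
    have hsum : ∑ k ∈ Finset.range (N+1), Complex.abs (bcoef z k) * u ^ (k * p.natDegree) =
        1 + ∑ k ∈ Finset.Ico 2 (N+1), Complex.abs (bcoef z k) * u ^ (k * p.natDegree) := by
      rw [h0, Finset.sum_insert (by simp)]
      congr 1
      · simp [bcoef_zero]
      · refine (Finset.sum_subset (fun k hk => ?_) (fun k hk1 hk2 => ?_)).symm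
        · simp only [Finset.mem_Ico] at hk ⊢; omega
        · have : k = 1 := by
            simp only [Finset.mem_Ico] at hk1 hk2; omega
          rw [this, bcoef_one]
          simp
    rw [hsum, add_comm]
    exact Real.add_one_le_exp _
  have hexp := expansion (F := F) N z u hu0.le
  have hprodexp : ∏ p ∈ Pset F N, ∑ k ∈ Finset.range (N+1),
      Complex.abs (bcoef z k) * u ^ (k * p.natDegree) ≤
      Real.exp (∑ p ∈ Pset F N, E p.natDegree) := by
    calc ∏ p ∈ Pset F N, ∑ k ∈ Finset.range (N+1),
        Complex.abs (bcoef z k) * u ^ (k * p.natDegree)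
        ≤ ∏ p ∈ Pset F N, Real.exp (E p.natDegree) := by
          apply Finset.prod_le_prod
          · intro p _
            exact Finset.sum_nonneg fun k _ =>
              mul_nonneg (Complex.abs.nonneg _) (pow_nonneg hu0.le _)
          · exact hinner
      _ = Real.exp (∑ p ∈ Pset F N, E p.natDegree) := (Real.exp_sum _ _).symm
  -- Step 5: fiberwise count
  have hfiber : ∑ p ∈ Pset F N, E p.natDegree =
      ∑ d ∈ Finset.Icc 1 N, ((Pset F N).filter (fun p => p.natDegree = d)).card • E d := by
    rw [← Finset.sum_fiberwise_of_maps_to (g := fun p : Polynomial F => p.natDegree)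
      (fun p hp => ?_) (fun p => E p.natDegree)]
    · apply Finset.sum_congr rfl
      intro d _
      rw [Finset.sum_congr rfl (fun p hp => by
        rw [(Finset.mem_filter.1 hp).2]), Finset.sum_const]
    · obtain ⟨hm', hirr, hdeg⟩ := mem_Pset.1 hp
      simp only [Finset.mem_Icc]
      exact ⟨hirr.natDegree_pos, hdeg⟩
  have hcount : ∀ d ∈ Finset.Icc 1 N,
      (((Pset F N).filter (fun p => p.natDegree = d)).card : ℝ) ≤ q ^ (d:ℝ) / d := by
    intro d hd
    obtain ⟨hd1, _⟩ := Finset.mem_Icc.1 hd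
    have hcard := card_irred_mul_le (F := F) d hd1
      ((Pset F N).filter (fun p => p.natDegree = d))
      (fun p hp => by
        obtain ⟨hp1, hp2⟩ := Finset.mem_filter.1 hp
        obtain ⟨hm', hirr, _⟩ := mem_Pset.1 hp1
        exact ⟨hm', hirr, hp2⟩)
    have hd0 : (0:ℝ) < (d:ℝ) := by exact_mod_cast hd1
    rw [le_div_iff₀ hd0, hqdef, Real.rpow_natCast]
    exact_mod_cast hcard
  -- Step 6: tail bound for E d
  have hEd : ∀ d : ℕ, 1 ≤ d → E d ≤ Mconst m * u ^ (2*d) := by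
    intro d hd1
    have hud : u ^ d ≤ r := by
      calc u ^ d ≤ u ^ 1 := pow_le_pow_of_le_one hu0.le hu1.le hd1
        _ = u := pow_one u
        _ ≤ r := hur
    rw [hEdef]
    simp only
    rw [Finset.sum_Ico_eq_sum_range]
    have hterm : ∀ j, Complex.abs (bcoef z (2+j)) * u ^ ((2+j)*d) ≤
        u ^ (2*d) * (((m:ℝ)+1) * ((j:ℝ)+4)^m * r^j) := by
      intro j
      have hc := abs_bcoef_le hm hz (2+j)
      have hpow : u ^ ((2+j)*d) = u^(2*d) * (u^d)^j := by
        rw [← pow_mul, ← pow_add]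
        ring_nf
      rw [hpow]
      have h4 : (u^d)^j ≤ r^j := pow_le_pow_left₀ (pow_nonneg hu0.le d) hud j
      have h5 : Complex.abs (bcoef z (2+j)) ≤ ((m:ℝ)+1) * ((j:ℝ)+4)^m := by
        refine hc.trans (le_of_eq ?_)
        push_cast
        ring_nf
      calc Complex.abs (bcoef z (2+j)) * (u^(2*d) * (u^d)^j)
          ≤ (((m:ℝ)+1) * ((j:ℝ)+4)^m) * (u^(2*d) * r^j) := by
            apply mul_le_mul h5
            · apply mul_le_mul_of_nonneg_left h4 (pow_nonneg hu0.le _)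
            · positivity
            · positivity
        _ = u ^ (2*d) * (((m:ℝ)+1) * ((j:ℝ)+4)^m * r^j) := by ring
    calc ∑ j ∈ Finset.range (N+1-2), Complex.abs (bcoef z (2+j)) * u ^ ((2+j)*d)
        ≤ ∑ j ∈ Finset.range (N+1-2), u ^ (2*d) * (((m:ℝ)+1) * ((j:ℝ)+4)^m * r^j) :=
          Finset.sum_le_sum fun j _ => hterm j
      _ = u ^ (2*d) * ∑ j ∈ Finset.range (N+1-2), ((m:ℝ)+1) * ((j:ℝ)+4)^m * r^j := by
          rw [Finset.mul_sum]
      _ ≤ u ^ (2*d) * Mconst m := by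
          apply mul_le_mul_of_nonneg_left _ (pow_nonneg hu0.le _)
          exact Summable.sum_le_tsum _ (fun j _ => by positivity) (summable_Mconst m)
      _ = Mconst m * u ^ (2*d) := by ring
  -- Step 7: assemble
  have hqu : ∀ d : ℕ, 1 ≤ d → q ^ (d:ℝ) / (d:ℝ) * (Mconst m * u ^ (2*d)) =
      Mconst m * (q ^ ((1 - 2*σ) * (d:ℝ)) / (d:ℝ)) := by
    intro d hd1
    have hd0 : (0:ℝ) < (d:ℝ) := by exact_mod_cast hd1
    have h1 : u ^ (2*d) = q ^ ((-(2*σ)) * (d:ℝ)) := by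
      rw [hudef, ← Real.rpow_natCast (q ^ (-σ)) (2*d), ← Real.rpow_mul hq0.le]
      congr 1
      push_cast
      ring
    have h2 : q ^ ((1 - 2*σ) * (d:ℝ)) = q ^ (d:ℝ) * q ^ ((-(2*σ)) * (d:ℝ)) := by
      rw [← Real.rpow_add hq0]
      congr 1
      ring
    rw [h1, h2]
    field_simp
  calc ∑ a ∈ Finset.range (N+1), Complex.abs (Bz F z a) * q ^ (-(σ * (a:ℝ)))
      ≤ ∑ a ∈ Finset.range (N+1), (∑ f ∈ Mdeg F a, Complex.abs (bzf z f)) * u ^ a :=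
        Finset.sum_le_sum fun a _ => hBz a
    _ = ∑ f ∈ MLe F N, Complex.abs (bzf z f) * u ^ f.natDegree := hsplit
    _ ≤ ∏ p ∈ Pset F N, ∑ k ∈ Finset.range (N+1),
          Complex.abs (bcoef z k) * u ^ (k * p.natDegree) := hexp
    _ ≤ Real.exp (∑ p ∈ Pset F N, E p.natDegree) := hprodexp
    _ ≤ Real.exp (Mconst m *
        ∑ d ∈ Finset.Icc 1 N, q ^ ((1 - 2*σ) * (d:ℝ)) / (d:ℝ)) := by
        apply Real.exp_le_exp.2
        rw [hfiber, Finset.mul_sum]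
        apply Finset.sum_le_sum
        intro d hd
        obtain ⟨hd1, _⟩ := Finset.mem_Icc.1 hd
        rw [nsmul_eq_mul]
        calc (((Pset F N).filter (fun p => p.natDegree = d)).card : ℝ) * E d
            ≤ (q ^ (d:ℝ) / d) * (Mconst m * u ^ (2*d)) := by
              apply mul_le_mul (hcount d hd) (hEd d hd1) (hE_nonneg d)
              positivity
          _ = Mconst m * (q ^ ((1 - 2*σ) * (d:ℝ)) / (d:ℝ)) := hqu d hd1

lemma two_le_cardF (F : Type) [Field F] [Fintype F] :
    (2:ℝ) ≤ (Fintype.card F : ℝ) := by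
  have h : 2 ≤ Fintype.card F := Fintype.one_lt_card
  exact_mod_cast h

lemma master_const {m : ℕ} (hm : 1 ≤ m) {z : ℂ} (hz : Complex.abs z ≤ m) {σ : ℝ}
    (hσ : 1/2 < σ) (N : ℕ) :
    ∑ a ∈ Finset.range (N+1),
        Complex.abs (Bz F z a) * (Fintype.card F : ℝ) ^ (-(σ * (a:ℝ))) ≤
      Real.exp (Mconst m * (1 - (2:ℝ) ^ (1 - 2*σ))⁻¹) := by
  set t : ℝ := (2:ℝ) ^ (1-2*σ) with htdef
  have ht0 : 0 < t := Real.rpow_pos_of_pos (by norm_num) _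
  have ht1 : t < 1 := Real.rpow_lt_one_of_one_lt_of_neg (by norm_num) (by linarith)
  refine (master hm hz hσ.le N).trans ?_
  apply Real.exp_le_exp.2
  refine mul_le_mul_of_nonneg_left ?_ (Mconst_nonneg m)
  have hq2 := two_le_cardF F
  calc ∑ d ∈ Finset.Icc 1 N, (Fintype.card F : ℝ) ^ ((1 - 2*σ) * (d:ℝ)) / (d:ℝ)
      ≤ ∑ d ∈ Finset.Icc 1 N, t^d := by
        apply Finset.sum_le_sum
        intro d hd
        obtain ⟨hd1, _⟩ := Finset.mem_Icc.1 hd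
        have hd0 : (1:ℝ) ≤ (d:ℝ) := by exact_mod_cast hd1
        have h1 : (Fintype.card F : ℝ) ^ ((1 - 2*σ) * (d:ℝ)) / (d:ℝ) ≤
            (Fintype.card F : ℝ) ^ ((1 - 2*σ) * (d:ℝ)) :=
          div_le_self (Real.rpow_nonneg (by linarith) _) hd0
        refine h1.trans ?_
        have h2 : (Fintype.card F : ℝ) ^ ((1 - 2*σ) * (d:ℝ)) ≤ (2:ℝ) ^ ((1 - 2*σ) * (d:ℝ)) :=
          rpow_base_le hq2 (mul_nonpos_of_nonpos_of_nonneg (by linarith) (Nat.cast_nonneg d))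
        refine h2.trans (le_of_eq ?_)
        rw [Real.rpow_mul (by norm_num : (0:ℝ) ≤ 2), Real.rpow_natCast]
    _ ≤ (1 - t)⁻¹ := by
        refine (Summable.sum_le_tsum (L := SummationFilter.unconditional ℕ) (f := fun d : ℕ => t^d) _ (fun d _ => (pow_nonneg ht0.le d)) ?_).trans_eq ?_
        · exact summable_geometric_of_lt_one ht0.le ht1
        · exact tsum_geometric_of_lt_one ht0.le ht1

lemma summable_poly_geom (B : ℕ) {ρ : ℝ} (h0 : 0 < ρ) (h1 : ρ < 1) :
    Summable (fun a : ℕ => ((a:ℝ)+1)^B * ρ^a) := by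
  have hs : Summable (fun a : ℕ => (a:ℝ)^B * ρ^a) :=
    summable_pow_mul_geometric_of_norm_lt_one B
      (by rw [Real.norm_eq_abs, abs_of_pos h0]; exact h1)
  have h2 : Summable (fun a : ℕ => (((a:ℕ)+1:ℝ))^B * ρ^(a+1)) := by
    have := (summable_nat_add_iff (f := fun a : ℕ => (a:ℝ)^B * ρ^a) 1).2 hs
    refine this.congr fun a => by push_cast; ring
  have h3 := h2.mul_left ρ⁻¹
  refine h3.congr fun a => ?_
  field_simp
  ring

end BzAux

open BzAux in
/-- Proposition 2.5: bounds for the coefficients `B_z(a)` of `F(T, z) = A(T,z)·ζ(T)^{-z}`. -/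
theorem Bz_bounds :
    ∀ A : ℝ, 1 < A →
      (∀ σ : ℝ, 1 / 2 < σ → ∃ c : ℝ,
        ∀ (F : Type) [Field F] [Fintype F], ∀ (n : ℕ) (z : ℂ), 2 ≤ n → ‖z‖ ≤ A →
          ∑ a ∈ Finset.range (n + 1),
            ‖Bz F z a‖ * (Fintype.card F : ℝ) ^ (-(σ * (a : ℝ))) ≤ c) ∧
      (∃ c : ℝ,
        ∀ (F : Type) [Field F] [Fintype F], ∀ (n : ℕ) (z : ℂ), 2 ≤ n → ‖z‖ ≤ A →
          ∑ a ∈ Finset.range (n + 1),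
            ‖Bz F z a‖ * (Fintype.card F : ℝ) ^ (-((a : ℝ) / 2)) ≤ (n : ℝ) ^ c) ∧
      (∃ C : ℝ,
        ∀ (F : Type) [Field F] [Fintype F], ∀ z : ℂ, ‖z‖ ≤ A →
          Summable (fun a : ℕ => ‖Bz F z a‖ *
            (Fintype.card F : ℝ) ^ (-(a : ℝ)) * (a : ℝ) ^ (2 * A + 2)) ∧
          ∑' a : ℕ, ‖Bz F z a‖ *
            (Fintype.card F : ℝ) ^ (-(a : ℝ)) * (a : ℝ) ^ (2 * A + 2) ≤ C) := by
  intro A hA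
  set m : ℕ := ⌈A⌉₊ with hmdef
  have hm1 : 1 ≤ m := Nat.one_le_iff_ne_zero.2 (by
    intro h
    have := Nat.ceil_pos (a := A).2 (by linarith)
    omega)
  have hAm : A ≤ (m:ℝ) := Nat.le_ceil A
  refine ⟨?_, ?_, ?_⟩
  · -- part (i)
    intro σ hσ
    refine ⟨Real.exp (Mconst m * (1 - (2:ℝ) ^ (1 - 2*σ))⁻¹), ?_⟩
    intro F _ _ n z hn hz
    exact master_const hm1 (hz.trans hAm) hσ n
  · -- part (ii)
    refine ⟨Mconst m / Real.log 2 + Mconst m, ?_⟩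
    intro F _ _ n z hn hz
    have hMc := Mconst_nonneg m
    have hlog2 : (0:ℝ) < Real.log 2 := Real.log_pos (by norm_num)
    have hn0 : (0:ℝ) < (n:ℝ) := by
      have : 0 < n := by omega
      exact_mod_cast this
    have hlogn : Real.log 2 ≤ Real.log n := by
      apply Real.log_le_log (by norm_num)
      exact_mod_cast hn
    have hmaster := master (F := F) hm1 (hz.trans hAm) (le_refl (1/2 : ℝ)) n
    have hLHS : ∑ a ∈ Finset.range (n + 1),
        ‖Bz F z a‖ * (Fintype.card F : ℝ) ^ (-((a : ℝ) / 2)) =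
        ∑ a ∈ Finset.range (n + 1),
        ‖Bz F z a‖ * (Fintype.card F : ℝ) ^ (-((1/2 : ℝ) * (a : ℝ))) := by
      apply Finset.sum_congr rfl
      intro a _
      rw [show -((a:ℝ)/2) = -((1/2:ℝ) * (a:ℝ)) by ring]
    have hsum0 : ∑ d ∈ Finset.Icc 1 n,
        (Fintype.card F : ℝ) ^ ((1 - 2*(1/2:ℝ)) * (d:ℝ)) / (d:ℝ) =
        ∑ d ∈ Finset.Icc 1 n, ((d:ℝ))⁻¹ := by
      apply Finset.sum_congr rfl
      intro d _
      rw [show (1 - 2*(1/2:ℝ)) = 0 by norm_num, zero_mul, Real.rpow_zero]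
      rw [one_div]
    have hharm : ∑ d ∈ Finset.Icc 1 n, ((d:ℝ))⁻¹ ≤ 1 + Real.log n := by
      have h := harmonic_le_one_add_log n
      have he : ((harmonic n : ℚ) : ℝ) = ∑ d ∈ Finset.Icc 1 n, ((d:ℝ))⁻¹ := by
        rw [harmonic_eq_sum_Icc]
        push_cast
        rfl
      linarith [he ▸ h]
    rw [hLHS]
    refine hmaster.trans ?_
    rw [hsum0]
    have hexp_le : Mconst m * ∑ d ∈ Finset.Icc 1 n, ((d:ℝ))⁻¹ ≤
        (Mconst m / Real.log 2 + Mconst m) * Real.log n := by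
      have h1 : Mconst m ≤ (Mconst m / Real.log 2) * Real.log n := by
        rw [div_mul_eq_mul_div, le_div_iff₀ hlog2]
        exact mul_le_mul_of_nonneg_left hlogn hMc
      have h2 : Mconst m * ∑ d ∈ Finset.Icc 1 n, ((d:ℝ))⁻¹ ≤
          Mconst m * (1 + Real.log n) := mul_le_mul_of_nonneg_left hharm hMc
      have h3 : Mconst m * Real.log n ≤ Mconst m * Real.log n := le_refl _
      nlinarith
    calc Real.exp (Mconst m * ∑ d ∈ Finset.Icc 1 n, ((d:ℝ))⁻¹)
        ≤ Real.exp ((Mconst m / Real.log 2 + Mconst m) * Real.log n) :=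
          Real.exp_le_exp.2 hexp_le
      _ = (n:ℝ) ^ (Mconst m / Real.log 2 + Mconst m) := by
          rw [Real.rpow_def_of_pos hn0]
          ring_nf
  · -- part (iii)
    set c₀ : ℝ := Real.exp (Mconst m * (1 - (2:ℝ) ^ (1 - 2*(3/4:ℝ)))⁻¹) with hc₀def
    have hc₀ : 0 < c₀ := Real.exp_pos _
    set ρ : ℝ := (2:ℝ) ^ (-(1/8 : ℝ)) with hρdef
    have hρ0 : 0 < ρ := Real.rpow_pos_of_pos (by norm_num) _
    have hρ1 : ρ < 1 := Real.rpow_lt_one_of_one_lt_of_neg (by norm_num) (by norm_num)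
    set m2 : ℕ := ⌈2*A+2⌉₊ with hm2def
    set K : ℝ := ∑' a : ℕ, ((a:ℝ)+1)^m2 * ρ^a with hKdef
    have hKsum : Summable (fun a : ℕ => ((a:ℝ)+1)^m2 * ρ^a) := summable_poly_geom m2 hρ0 hρ1
    have hK0 : 0 ≤ K := tsum_nonneg fun a => by positivity
    refine ⟨c₀ * K * (1-ρ)⁻¹, ?_⟩
    intro F _ _ z hz
    have hq2 := two_le_cardF F
    have hq0 : (0:ℝ) < (Fintype.card F : ℝ) := by linarith
    have key : ∀ a : ℕ, Complex.abs (Bz F z a) *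
        (Fintype.card F : ℝ) ^ (-((3/4:ℝ) * (a:ℝ))) ≤ c₀ := by
      intro a
      refine le_trans (Finset.single_le_sum
        (f := fun b : ℕ => Complex.abs (Bz F z b) *
          (Fintype.card F : ℝ) ^ (-((3/4:ℝ) * (b:ℝ))))
        (fun b _ => mul_nonneg (Complex.abs.nonneg _) (Real.rpow_nonneg hq0.le _))
        (Finset.self_mem_range_succ a)) ?_
      exact master_const hm1 (hz.trans hAm) (by norm_num) a
    have hstep : ∀ a : ℕ, (Fintype.card F : ℝ) ^ (-((1/4:ℝ) * (a:ℝ))) *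
        (a:ℝ) ^ (2*A+2) ≤ K * ρ^a := by
      intro a
      have h1 : (Fintype.card F : ℝ) ^ (-((1/4:ℝ) * (a:ℝ))) ≤ (2:ℝ) ^ (-((1/4:ℝ) * (a:ℝ))) :=
        rpow_base_le hq2 (by
          have : (0:ℝ) ≤ (1/4:ℝ) * (a:ℝ) := by positivity
          linarith)
      have hρa : (2:ℝ) ^ ((-(1/8:ℝ)) * (a:ℝ)) = ρ^a := by
        rw [Real.rpow_mul (by norm_num : (0:ℝ) ≤ 2), Real.rpow_natCast]
      have h2 : (2:ℝ) ^ (-((1/4:ℝ) * (a:ℝ))) = ρ^a * ρ^a := by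
        rw [show -((1/4:ℝ) * (a:ℝ)) = (-(1/8:ℝ)) * (a:ℝ) + (-(1/8:ℝ)) * (a:ℝ) by ring,
          Real.rpow_add (by norm_num : (0:ℝ) < 2), hρa]
      have h3 : (a:ℝ) ^ (2*A+2) ≤ ((a:ℝ)+1)^m2 := by
        have ha1 : (a:ℝ) ^ (2*A+2) ≤ ((a:ℝ)+1) ^ (2*A+2) :=
          Real.rpow_le_rpow (Nat.cast_nonneg a) (by linarith) (by linarith)
        have ha2 : ((a:ℝ)+1) ^ (2*A+2) ≤ ((a:ℝ)+1) ^ ((m2:ℕ):ℝ) :=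
          Real.rpow_le_rpow_of_exponent_le (by linarith [Nat.cast_nonneg (α := ℝ) a])
            (Nat.le_ceil _)
        rw [Real.rpow_natCast] at ha2
        exact ha1.trans ha2
      have h4 : ((a:ℝ)+1)^m2 * ρ^a ≤ K :=
        Summable.le_tsum hKsum a (fun b _ => by positivity)
      calc (Fintype.card F : ℝ) ^ (-((1/4:ℝ) * (a:ℝ))) * (a:ℝ) ^ (2*A+2)
          ≤ (2:ℝ) ^ (-((1/4:ℝ) * (a:ℝ))) * (((a:ℝ)+1)^m2) := by
            apply mul_le_mul h1 h3 (Real.rpow_nonneg (Nat.cast_nonneg a) _)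
              (Real.rpow_nonneg (by norm_num) _)
        _ = (((a:ℝ)+1)^m2 * ρ^a) * ρ^a := by rw [h2]; ring
        _ ≤ K * ρ^a := mul_le_mul_of_nonneg_right h4 (pow_nonneg hρ0.le a)
    have hbound : ∀ a : ℕ, Complex.abs (Bz F z a) *
        (Fintype.card F : ℝ) ^ (-(a:ℝ)) * (a:ℝ) ^ (2*A+2) ≤ (c₀ * K) * ρ^a := by
      intro a
      have hqsplit : (Fintype.card F : ℝ) ^ (-(a:ℝ)) =
          (Fintype.card F : ℝ) ^ (-((3/4:ℝ) * (a:ℝ))) *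
          (Fintype.card F : ℝ) ^ (-((1/4:ℝ) * (a:ℝ))) := by
        rw [← Real.rpow_add hq0]
        congr 1
        ring
      calc Complex.abs (Bz F z a) * (Fintype.card F : ℝ) ^ (-(a:ℝ)) * (a:ℝ) ^ (2*A+2)
          = (Complex.abs (Bz F z a) * (Fintype.card F : ℝ) ^ (-((3/4:ℝ) * (a:ℝ)))) *
            ((Fintype.card F : ℝ) ^ (-((1/4:ℝ) * (a:ℝ))) * (a:ℝ) ^ (2*A+2)) := by
            rw [hqsplit]; ring
        _ ≤ c₀ * (K * ρ^a) := by
            apply mul_le_mul (key a) (hstep a) ?_ hc₀.le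
            exact mul_nonneg (Real.rpow_nonneg hq0.le _) (Real.rpow_nonneg (Nat.cast_nonneg a) _)
        _ = (c₀ * K) * ρ^a := by ring
    have hgsum : Summable (fun a : ℕ => (c₀ * K) * ρ^a) :=
      (summable_geometric_of_lt_one hρ0.le hρ1).mul_left _
    have hf_nonneg : ∀ a : ℕ, 0 ≤ Complex.abs (Bz F z a) *
        (Fintype.card F : ℝ) ^ (-(a:ℝ)) * (a:ℝ) ^ (2*A+2) := by
      intro a
      have h1 : 0 ≤ (Fintype.card F : ℝ) ^ (-(a:ℝ)) := Real.rpow_nonneg hq0.le _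
      have h2 : 0 ≤ (a:ℝ) ^ (2*A+2) := Real.rpow_nonneg (Nat.cast_nonneg a) _
      positivity
    have hfsum : Summable (fun a : ℕ => Complex.abs (Bz F z a) *
        (Fintype.card F : ℝ) ^ (-(a:ℝ)) * (a:ℝ) ^ (2*A+2)) :=
      Summable.of_nonneg_of_le hf_nonneg hbound hgsum
    refine ⟨hfsum, ?_⟩
    calc ∑' a : ℕ, Complex.abs (Bz F z a) *
          (Fintype.card F : ℝ) ^ (-(a:ℝ)) * (a:ℝ) ^ (2*A+2)
        ≤ ∑' a : ℕ, (c₀ * K) * ρ^a := Summable.tsum_le_tsum hbound hfsum hgsum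
      _ = (c₀ * K) * ∑' a : ℕ, ρ^a := tsum_mul_left
      _ = c₀ * K * (1-ρ)⁻¹ := by rw [tsum_geometric_of_lt_one hρ0.le hρ1]
end
end

section
/- For every real A > 1 there exists a constant C_A such that for every prime power q, every d ∈ ℳ of degree m ≥ 1, every real σ with σ ≥ 2/3 and every z ∈ ℂ with |z| ≤ A, Σ_{a≥0} |B^d_z(a)|·q^{−σa} ≤ C_A·∏_{p∈ℐ, p∣d} (1 − q^{−σ·deg p})^{−A}. -/
open Polynomial UniqueFactorizationMonoid
open scoped Classical

noncomputable section

/-- The values of `b^d_z` on `p^k`: the coefficient of `S^k` in `(1-S)^z` if `p ∣ d`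
(namely `(-1)^k·cbinom z k`), and the coefficient of `S^k` in `(1 + zS)·(1-S)^z` otherwise. -/
def bdcoef {F : Type} [Field F] (d : Polynomial F) (z : ℂ) (p : Polynomial F) (k : ℕ) : ℂ :=
  if p ∣ d then (-1 : ℂ) ^ k * cbinom z k else bcoef z k

/-- `b^d_z`, the multiplicative function on monic polynomials determined by `bdcoef`. -/
def bdzf {F : Type} [Field F] (d : Polynomial F) (z : ℂ) (f : Polynomial F) : ℂ :=
  ∏ p ∈ (normalizedFactors f).toFinset,
    bdcoef d z p (Multiset.count p (normalizedFactors f))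

/-- `B^d_z(n) = Σ_{f monic, deg f = n} b^d_z(f)`. -/
def Bdz (F : Type) [Field F] (d : Polynomial F) (z : ℂ) (n : ℕ) : ℂ :=
  ∑ᶠ f ∈ {f : Polynomial F | f.Monic ∧ f.natDegree = n}, bdzf d z f


def rb (A : ℝ) (k : ℕ) : ℝ := (∏ j ∈ Finset.range k, (A + j)) / (Nat.factorial k)

lemma rb_zero (A : ℝ) : rb A 0 = 1 := by simp [rb]

lemma rb_nonneg {A : ℝ} (hA : 0 ≤ A) (k : ℕ) : 0 ≤ rb A k :=
  div_nonneg (Finset.prod_nonneg fun j _ => by positivity) (by positivity)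

lemma rb_succ (A : ℝ) (k : ℕ) : rb A (k + 1) = rb A k * ((A + k) / (k + 1)) := by
  have h1 : (Nat.factorial k : ℝ) ≠ 0 := Nat.cast_ne_zero.mpr (Nat.factorial_ne_zero k)
  have h2 : ((k : ℝ) + 1) ≠ 0 := by positivity
  unfold rb
  rw [Finset.prod_range_succ, Nat.factorial_succ]
  push_cast
  rw [div_mul_div_comm, mul_comm ((Nat.factorial k : ℝ)) ((k:ℝ)+1)]

lemma rb_rec (A : ℝ) (k : ℕ) : ((k : ℝ) + 1) * rb A (k + 1) = (A + k) * rb A k := by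
  have h2 : ((k : ℝ) + 1) ≠ 0 := by positivity
  rw [rb_succ]
  field_simp

lemma rb_mono {A : ℝ} (hA : 1 ≤ A) (k : ℕ) : rb A k ≤ rb A (k + 1) := by
  rw [rb_succ]
  apply le_mul_of_one_le_right (rb_nonneg (by linarith) k)
  rw [le_div_iff₀ (by positivity)]
  have : (0:ℝ) ≤ (k:ℝ) := Nat.cast_nonneg k
  linarith

lemma DISC {A : ℝ} (hA : 0 ≤ A) {s : ℝ} (hs : 0 ≤ s) (N : ℕ) :
    ∑ k ∈ Finset.range N, rb A k * (k * s ^ (k - 1)) ≤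
      ∑ k ∈ Finset.range N, (A + k) * (rb A k * s ^ k) := by
  rcases N with _ | M
  · simp
  rw [Finset.sum_range_succ' (fun k => rb A k * ((k : ℝ) * s ^ (k - 1))) M]
  have step : ∀ k : ℕ, rb A (k + 1) * (((k : ℝ) + 1) * s ^ (k + 1 - 1)) = (A + k) * (rb A k * s ^ k) := by
    intro k
    have h := rb_rec A k
    simp only [Nat.add_sub_cancel]
    calc rb A (k + 1) * (((k : ℝ) + 1) * s ^ k) = (((k : ℝ) + 1) * rb A (k + 1)) * s ^ k := by ring
      _ = ((A + k) * rb A k) * s ^ k := by rw [h]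
      _ = (A + k) * (rb A k * s ^ k) := by ring
  have e0 : rb A 0 * ((0:ℕ) * s ^ (0 - 1)) = 0 := by simp
  push_cast
  push_cast at step
  rw [Finset.sum_congr rfl (fun k _ => step k)]
  simp only [Nat.cast_zero, zero_mul, mul_zero, add_zero]
  apply Finset.sum_le_sum_of_subset_of_nonneg (Finset.range_subset_range.mpr (Nat.le_succ M))
  intro i _ _
  have h1 : (0:ℝ) ≤ A + i := by positivity
  exact mul_nonneg h1 (mul_nonneg (rb_nonneg hA i) (pow_nonneg hs i))

lemma BIN {A : ℝ} (hA : 1 ≤ A) {t : ℝ} (ht0 : 0 ≤ t) (ht1 : t < 1) (N : ℕ) :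
    ∑ k ∈ Finset.range N, rb A k * t ^ k ≤ (1 - t) ^ (-A) := by
  have h1t : 0 < 1 - t := by linarith
  have hrA : 0 < (1 - t) ^ (-A) := Real.rpow_pos_of_pos h1t _
  rcases Nat.eq_zero_or_pos N with rfl | hN
  · simpa using hrA.le
  set S : ℝ → ℝ := fun s => ∑ k ∈ Finset.range N, rb A k * s ^ k with hS
  set S' : ℝ → ℝ := fun s => ∑ k ∈ Finset.range N, rb A k * ((k : ℝ) * s ^ (k - 1)) with hS'
  set f : ℝ → ℝ := fun s => (1 - s) ^ A * S s with hf
  have hder : ∀ s : ℝ, s < 1 →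
      HasDerivAt f (A * (1 - s) ^ (A - 1) * (-1) * S s + (1 - s) ^ A * S' s) s := by
    intro s hs
    have h1 : HasDerivAt (fun u : ℝ => 1 - u) (-1) s := (hasDerivAt_id s).const_sub 1
    have h2 : HasDerivAt (fun y : ℝ => y ^ A) (A * (1 - s) ^ (A - 1)) (1 - s) :=
      Real.hasDerivAt_rpow_const (Or.inl (by linarith))
    have h3 : HasDerivAt (fun u : ℝ => (1 - u) ^ A) (A * (1 - s) ^ (A - 1) * (-1)) s := h2.comp s h1
    have h4 : HasDerivAt S (S' s) s := by
      apply HasDerivAt.fun_sum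
      intro k _
      simpa using (hasDerivAt_pow k s).const_mul (rb A k)
    exact h3.mul h4
  have hnonpos : ∀ s : ℝ, 0 ≤ s → s < 1 →
      A * (1 - s) ^ (A - 1) * (-1) * S s + (1 - s) ^ A * S' s ≤ 0 := by
    intro s hs0 hs1
    have h1s : 0 < 1 - s := by linarith
    have key : (1 - s) * S' s ≤ A * S s := by
      have hd := DISC (by linarith : (0:ℝ) ≤ A) hs0 N
      have expand : ∑ k ∈ Finset.range N, (A + k) * (rb A k * s ^ k) = A * S s + s * S' s := by
        rw [hS, hS']
        simp only
        rw [Finset.mul_sum, Finset.mul_sum, ← Finset.sum_add_distrib]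
        apply Finset.sum_congr rfl
        intro k _
        rcases k with _ | j
        · simp
        · simp only [Nat.add_sub_cancel]
          push_cast
          rw [pow_succ]
          ring
      have hSle : S' s ≤ A * S s + s * S' s := by
        rw [← expand]; exact hd
      nlinarith
    have hsplit : (1 - s) ^ A = (1 - s) ^ (A - 1) * (1 - s) := by
      rw [← Real.rpow_add_one h1s.ne' (A - 1)]
      ring_nf
    have hB : 0 < (1 - s) ^ (A - 1) := Real.rpow_pos_of_pos h1s _
    rw [hsplit]
    nlinarith [mul_nonpos_of_nonneg_of_nonpos hB.le (by linarith : (1 - s) * S' s - A * S s ≤ 0)]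
  have hanti : AntitoneOn f (Set.Icc 0 t) := by
    apply antitoneOn_of_deriv_nonpos (convex_Icc 0 t)
    · intro s hs
      exact (hder s (lt_of_le_of_lt hs.2 ht1)).continuousAt.continuousWithinAt
    · intro s hs
      rw [interior_Icc] at hs
      exact (hder s (hs.2.trans ht1)).differentiableAt.differentiableWithinAt
    · intro s hs
      rw [interior_Icc] at hs
      rw [(hder s (lt_trans hs.2 ht1)).deriv]
      exact hnonpos s hs.1.le (lt_trans hs.2 ht1)
  have hS0 : S 0 = 1 := by
    rw [hS]
    simp only
    rw [Finset.sum_eq_single_of_mem 0 (Finset.mem_range.mpr hN)]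
    · simp [rb_zero]
    · intro k _ hk
      simp [zero_pow hk]
  have h0 : f 0 = 1 := by
    rw [hf]; simp only [sub_zero, Real.one_rpow, one_mul, hS0]
  have hft : f t ≤ 1 := by
    rw [← h0]
    exact hanti (Set.mem_Icc.mpr ⟨le_refl 0, ht0⟩) (Set.mem_Icc.mpr ⟨ht0, le_refl t⟩) ht0
  have hpos : 0 < (1 - t) ^ A := Real.rpow_pos_of_pos h1t A
  rw [Real.rpow_neg h1t.le, ← one_div, le_div_iff₀ hpos]
  calc S t * (1 - t) ^ A = f t := by rw [hf]; ring
    _ ≤ 1 := hft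

lemma cbinom_zero (z : ℂ) : cbinom z 0 = 1 := by simp [cbinom]

lemma cbinom_one (z : ℂ) : cbinom z 1 = z := by simp [cbinom]

lemma bcoef_zero (z : ℂ) : bcoef z 0 = 1 := rfl

lemma bcoef_one (z : ℂ) : bcoef z 1 = 0 := by
  show z * ((-1 : ℂ) ^ 0 * cbinom z 0) + (-1 : ℂ) ^ 1 * cbinom z 1 = 0
  rw [cbinom_zero, cbinom_one]
  ring

lemma abs_cbinom_le {A : ℝ} {z : ℂ} (hA : 0 ≤ A) (hz : ‖z‖ ≤ A) (k : ℕ) :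
    ‖cbinom z k‖ ≤ rb A k := by
  unfold cbinom rb
  rw [norm_div, norm_prod, Complex.norm_natCast]
  have hfac : (0:ℝ) < (Nat.factorial k : ℝ) := by positivity
  rw [div_le_div_iff_of_pos_right hfac]
  apply Finset.prod_le_prod (fun j _ => norm_nonneg _)
  intro j hj
  calc ‖z - (j : ℂ)‖ ≤ ‖z‖ + ‖(j : ℂ)‖ := by
        rw [sub_eq_add_neg]
        exact (norm_add_le z (-(j:ℂ))).trans_eq (by rw [norm_neg])
    _ ≤ A + j := by rw [Complex.norm_natCast]; linarith

lemma abs_bcoef_le {A : ℝ} {z : ℂ} (hA : 1 ≤ A) (hz : ‖z‖ ≤ A) (j : ℕ) :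
    ‖bcoef z (j + 2)‖ ≤ (A + 1) * rb A (j + 2) := by
  have h0 : (0:ℝ) ≤ A := by linarith
  show ‖z * ((-1 : ℂ) ^ (j+1) * cbinom z (j+1)) + (-1 : ℂ) ^ (j + 2) * cbinom z (j + 2)‖ ≤ _
  calc ‖z * ((-1 : ℂ) ^ (j+1) * cbinom z (j+1)) + (-1 : ℂ) ^ (j + 2) * cbinom z (j + 2)‖
      ≤ ‖z * ((-1 : ℂ) ^ (j+1) * cbinom z (j+1))‖
        + ‖(-1 : ℂ) ^ (j + 2) * cbinom z (j + 2)‖ := norm_add_le _ _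
    _ = ‖z‖ * ‖cbinom z (j+1)‖ + ‖cbinom z (j+2)‖ := by
        rw [norm_mul, norm_mul, norm_mul, norm_pow, norm_pow]
        simp
    _ ≤ A * rb A (j+1) + rb A (j+2) := by
        have h1 := abs_cbinom_le h0 hz (j+1)
        have h2 := abs_cbinom_le h0 hz (j+2)
        have h3 := norm_nonneg (cbinom z (j+1))
        nlinarith [rb_nonneg h0 (j+1)]
    _ ≤ (A + 1) * rb A (j + 2) := by
        have := rb_mono hA (j+1)
        have := rb_nonneg h0 (j+1)
        nlinarith

section PolyField
variable {F : Type} [Field F]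

lemma monic_of_mem_nf {f p : Polynomial F} (hp : p ∈ normalizedFactors f) : p.Monic := by
  have h0 : p ≠ 0 := fun h => (zero_notMem_normalizedFactors f) (h ▸ hp)
  have hn := normalize_normalized_factor p hp
  rw [← hn]
  exact Polynomial.monic_normalize h0

lemma nf_prod_eq {f : Polynomial F} (hf : f.Monic) : (normalizedFactors f).prod = f := by
  have hm : (normalizedFactors f).prod.Monic := by
    rw [← Multiset.map_id (normalizedFactors f)]
    exact Polynomial.monic_multiset_prod_of_monic _ id fun p hp => monic_of_mem_nf hp
  exact Polynomial.eq_of_monic_of_associated hm hf (prod_normalizedFactors hf.ne_zero)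

lemma mem_nf_of_dvd {d p : Polynomial F} (hd : d ≠ 0) (hpm : p.Monic) (hpi : Irreducible p)
    (hdvd : p ∣ d) : p ∈ normalizedFactors d := by
  obtain ⟨q, hq, hassoc⟩ := exists_mem_normalizedFactors_of_dvd hd hpi hdvd
  rwa [Polynomial.eq_of_monic_of_associated hpm (monic_of_mem_nf hq) hassoc]

lemma MS_finite (F : Type) [Field F] [Fintype F] (n : ℕ) :
    {f : Polynomial F | f.Monic ∧ f.natDegree = n}.Finite := by
  apply Set.Finite.of_finite_image (f := fun f => fun i : Fin (n + 1) => f.coeff i)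
    (Set.toFinite _)
  intro f hf g hg h
  apply Polynomial.ext
  intro i
  rcases le_or_gt i n with hi | hi
  · exact congrFun h ⟨i, by omega⟩
  · rw [Polynomial.coeff_eq_zero_of_natDegree_lt (by rw [hf.2]; exact hi),
      Polynomial.coeff_eq_zero_of_natDegree_lt (by rw [hg.2]; exact hi)]

lemma MS_card_le (F : Type) [Field F] [Fintype F] (n : ℕ) :
    (MS_finite F n).toFinset.card ≤ Fintype.card F ^ n := by
  have h : (MS_finite F n).toFinset.card ≤ (Finset.univ : Finset (Fin n → F)).card := by
    apply Finset.card_le_card_of_injOn (fun f => fun i : Fin n => f.coeff i)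
      (fun _ _ => Finset.mem_univ _)
    intro f hf g hg h
    simp only [Finset.mem_coe, Set.Finite.mem_toFinset, Set.mem_setOf_eq] at hf hg
    apply Polynomial.ext
    intro i
    rcases lt_trichotomy i n with hi | rfl | hi
    · exact congrFun h ⟨i, hi⟩
    · have h1 := hf.1.coeff_natDegree
      rw [hf.2] at h1
      have h2 := hg.1.coeff_natDegree
      rw [hg.2] at h2
      rw [h1, h2]
    · rw [Polynomial.coeff_eq_zero_of_natDegree_lt (by rw [hf.2]; exact hi),
        Polynomial.coeff_eq_zero_of_natDegree_lt (by rw [hg.2]; exact hi)]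
  simpa [Finset.card_univ] using h

lemma key_expand (U P : Finset (Polynomial F)) (w : Polynomial F → ℕ → ℝ)
    (hw : ∀ p k, 0 ≤ w p k) (M : ℕ)
    (hcnt : ∀ f ∈ U, ∀ p ∈ P, Multiset.count p (normalizedFactors f) ≤ M)
    (hsupp : ∀ f ∈ U, (normalizedFactors f).toFinset ⊆ P)
    (hmonic : ∀ f ∈ U, (f : Polynomial F).Monic) :
    ∑ f ∈ U, ∏ p ∈ P, w p (Multiset.count p (normalizedFactors f)) ≤
      ∏ p ∈ P, ∑ k ∈ Finset.range (M + 1), w p k := by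
  classical
  rw [Finset.prod_sum]
  set e : Polynomial F → (∀ a : Polynomial F, a ∈ P → ℕ) :=
    fun f => fun p _ => Multiset.count p (normalizedFactors f) with he
  have hinj : ∀ f ∈ U, ∀ g ∈ U, e f = e g → f = g := by
    intro f hf g hg hfg
    have hcnt_eq : ∀ p, Multiset.count p (normalizedFactors f)
        = Multiset.count p (normalizedFactors g) := by
      intro p
      by_cases hp : p ∈ P
      · exact congrFun (congrFun hfg p) hp
      · have h1 : p ∉ (normalizedFactors f).toFinset := fun hmem => hp (hsupp f hf hmem)
        have h2 : p ∉ (normalizedFactors g).toFinset := fun hmem => hp (hsupp g hg hmem)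
        rw [Multiset.mem_toFinset] at h1 h2
        rw [Multiset.count_eq_zero_of_notMem h1, Multiset.count_eq_zero_of_notMem h2]
    have hnf : normalizedFactors f = normalizedFactors g := Multiset.ext.mpr hcnt_eq
    rw [← nf_prod_eq (hmonic f hf), ← nf_prod_eq (hmonic g hg), hnf]
  calc ∑ f ∈ U, ∏ p ∈ P, w p (Multiset.count p (normalizedFactors f))
      = ∑ f ∈ U, ∏ x ∈ P.attach, w x.1 (e f x.1 x.2) := by
        apply Finset.sum_congr rfl
        intro f _
        rw [← Finset.prod_attach P (fun p => w p (Multiset.count p (normalizedFactors f)))]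
    _ = ∑ y ∈ U.image e, ∏ x ∈ P.attach, w x.1 (y x.1 x.2) := by
        rw [Finset.sum_image hinj]
    _ ≤ ∑ y ∈ P.pi (fun _ => Finset.range (M + 1)), ∏ x ∈ P.attach, w x.1 (y x.1 x.2) := by
        apply Finset.sum_le_sum_of_subset_of_nonneg
        · intro y hy
          obtain ⟨f, hf, rfl⟩ := Finset.mem_image.mp hy
          rw [Finset.mem_pi]
          intro p hp
          rw [Finset.mem_range]
          exact Nat.lt_succ_of_le (hcnt f hf p hp)
        · intro y _ _
          exact Finset.prod_nonneg fun x _ => hw _ _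

end PolyField

section MainAux
variable {F : Type} [Field F]

lemma bdcoef_zero_eq (d : Polynomial F) (z : ℂ) (p : Polynomial F) : bdcoef d z p 0 = 1 := by
  unfold bdcoef
  split
  · simp [cbinom_zero]
  · rfl

end MainAux


/-- Lemma 3.6: bound for `Σ_a |B^d_z(a)|·q^{-σa}`. -/
theorem Bdz_bound :
    ∀ A : ℝ, 1 < A → ∃ C : ℝ,
      ∀ (F : Type) [Field F] [Fintype F], ∀ d : Polynomial F, d.Monic → 1 ≤ d.natDegree →
        ∀ (σ : ℝ) (z : ℂ), 2 / 3 ≤ σ → ‖z‖ ≤ A →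
          Summable (fun a : ℕ =>
            ‖Bdz F d z a‖ * (Fintype.card F : ℝ) ^ (-(σ * (a : ℝ)))) ∧
          ∑' a : ℕ, ‖Bdz F d z a‖ * (Fintype.card F : ℝ) ^ (-(σ * (a : ℝ))) ≤
            C * ∏ p ∈ (normalizedFactors d).toFinset,
              (1 - (Fintype.card F : ℝ) ^ (-(σ * (p.natDegree : ℝ)))) ^ (-A) := by
  intro A hA
  have hA0 : (0:ℝ) ≤ A := by linarith
  set t0 : ℝ := (2 : ℝ) ^ (-(2/3 : ℝ)) with ht0def
  have ht0pos : 0 < t0 := Real.rpow_pos_of_pos two_pos _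
  have ht0lt1 : t0 < 1 := Real.rpow_lt_one_of_one_lt_of_neg one_lt_two (by norm_num)
  set r0 : ℝ := (2 : ℝ) ^ (-(1/3 : ℝ)) with hr0def
  have hr0pos : 0 < r0 := Real.rpow_pos_of_pos two_pos _
  have hr0lt1 : r0 < 1 := Real.rpow_lt_one_of_one_lt_of_neg one_lt_two (by norm_num)
  set EA : ℝ := (A + 1) * (1 - t0) ^ (-A) / t0 ^ 2 with hEAdef
  have hEApos : 0 ≤ EA :=
    div_nonneg (mul_nonneg (by linarith) (Real.rpow_pos_of_pos (by linarith) _).le) (by positivity)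
  set c1 : ℝ := (1 - r0)⁻¹ with hc1def
  refine ⟨Real.exp (EA * c1), ?_⟩
  intro F _ _ d hd hdeg σ z hσ hz
  classical
  have hq2 : 2 ≤ Fintype.card F := Fintype.one_lt_card
  have hq2R : (2:ℝ) ≤ (Fintype.card F : ℝ) := by exact_mod_cast hq2
  have hq1 : (1:ℝ) ≤ (Fintype.card F : ℝ) := by linarith
  have hq0 : (0:ℝ) ≤ (Fintype.card F : ℝ) := by linarith
  have hqpos : (0:ℝ) < (Fintype.card F : ℝ) := by linarith
  set x : ℝ := (Fintype.card F : ℝ) ^ (-σ) with hxdef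
  have hσ0 : 0 < σ := by linarith
  have hxpos : 0 < x := Real.rpow_pos_of_pos hqpos _
  have hbase : ∀ c : ℝ, 0 ≤ c → (Fintype.card F : ℝ) ^ (-c) ≤ (2:ℝ) ^ (-c) := by
    intro c hc
    rw [Real.rpow_neg hq0, Real.rpow_neg (by norm_num)]
    exact inv_anti₀ (Real.rpow_pos_of_pos two_pos c)
      (Real.rpow_le_rpow (by norm_num) hq2R hc)
  have hxt0 : x ≤ t0 := by
    calc x ≤ (Fintype.card F : ℝ) ^ (-(2/3:ℝ)) :=
          Real.rpow_le_rpow_of_exponent_le hq1 (by linarith)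
      _ ≤ t0 := hbase _ (by norm_num)
  have hxlt1 : x < 1 := lt_of_le_of_lt hxt0 ht0lt1
  have hx1 : x ≤ 1 := hxlt1.le
  have hxa : ∀ a : ℕ, (Fintype.card F : ℝ) ^ (-(σ * (a:ℝ))) = x ^ a := by
    intro a
    rw [show -(σ * (a:ℝ)) = (-σ) * (a:ℝ) by ring, Real.rpow_mul hq0, Real.rpow_natCast]
  set Ffin : ℕ → Finset (Polynomial F) := fun n => (MS_finite F n).toFinset with hFfin
  have hFmem : ∀ (n : ℕ) (f : Polynomial F), f ∈ Ffin n ↔ f.Monic ∧ f.natDegree = n := by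
    intro n f
    rw [hFfin]
    simp [Set.Finite.mem_toFinset]
  have habs : ∀ a : ℕ, ‖Bdz F d z a‖ ≤ ∑ f ∈ Ffin a, ‖bdzf d z f‖ := by
    intro a
    have h1 : Bdz F d z a = ∑ f ∈ Ffin a, bdzf d z f :=
      finsum_mem_eq_finite_toFinset_sum _ (MS_finite F a)
    rw [h1]
    exact norm_sum_le _ _
  set Pd : ℝ := ∏ p ∈ (normalizedFactors d).toFinset,
      (1 - (Fintype.card F : ℝ) ^ (-(σ * (p.natDegree : ℝ)))) ^ (-A) with hPddef
  have hdne : d ≠ 0 := hd.ne_zero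
  have hdegpos : ∀ p : Polynomial F, Irreducible p → 1 ≤ p.natDegree := by
    intro p hp
    exact Polynomial.natDegree_pos_iff_degree_pos.mpr (Polynomial.degree_pos_of_irreducible hp)
  have hxd1 : ∀ m : ℕ, 1 ≤ m → x ^ m < 1 := fun m hm => pow_lt_one₀ hxpos.le hxlt1 (by omega)
  have hPdfac : ∀ p ∈ (normalizedFactors d).toFinset,
      (1 - (Fintype.card F : ℝ) ^ (-(σ * (p.natDegree : ℝ)))) ^ (-A)
        = (1 - x ^ p.natDegree) ^ (-A) := by
    intro p _
    rw [hxa]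
  have hPdnn : 0 ≤ Pd := by
    rw [hPddef]
    apply Finset.prod_nonneg
    intro p _
    apply Real.rpow_nonneg
    rw [hxa]
    have := pow_le_one₀ hxpos.le hx1 (n := p.natDegree)
    linarith
  -- main bound for partial sums
  have main : ∀ N : ℕ, ∑ a ∈ Finset.range N,
      ‖Bdz F d z a‖ * (Fintype.card F : ℝ) ^ (-(σ * (a:ℝ)))
        ≤ Real.exp (EA * c1) * Pd := by
    intro N
    set P : Finset (Polynomial F) :=
      ((Finset.range (N+1)).biUnion Ffin).filter (fun p => Irreducible p) with hP
    have hPmem : ∀ p : Polynomial F, p ∈ P ↔ p.Monic ∧ p.natDegree ≤ N ∧ Irreducible p := by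
      intro p
      rw [hP, Finset.mem_filter, Finset.mem_biUnion]
      constructor
      · rintro ⟨⟨n, hn, hf⟩, hirr⟩
        rw [hFmem] at hf
        exact ⟨hf.1, hf.2 ▸ Nat.lt_succ_iff.mp (Finset.mem_range.mp hn), hirr⟩
      · rintro ⟨hm, hdegle, hirr⟩
        exact ⟨⟨p.natDegree, Finset.mem_range.mpr (Nat.lt_succ_of_le hdegle),
          (hFmem _ _).mpr ⟨hm, rfl⟩⟩, hirr⟩
    set U : Finset (Polynomial F) := (Finset.range N).biUnion Ffin with hUdef
    have hUmem : ∀ f : Polynomial F, f ∈ U ↔ f.Monic ∧ f.natDegree < N := by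
      intro f
      rw [hUdef, Finset.mem_biUnion]
      constructor
      · rintro ⟨n, hn, hf⟩
        rw [hFmem] at hf
        exact ⟨hf.1, hf.2 ▸ Finset.mem_range.mp hn⟩
      · rintro ⟨hm, hlt⟩
        exact ⟨f.natDegree, Finset.mem_range.mpr hlt, (hFmem _ _).mpr ⟨hm, rfl⟩⟩
    set w : Polynomial F → ℕ → ℝ :=
      fun p k => ‖bdcoef d z p k‖ * x ^ (k * p.natDegree) with hwdef
    have hwnn : ∀ p k, 0 ≤ w p k :=
      fun p k => mul_nonneg (norm_nonneg _) (pow_nonneg hxpos.le _)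
    -- step 1
    have hdisj : (↑(Finset.range N) : Set ℕ).PairwiseDisjoint Ffin := by
      intro a _ b _ hab
      apply Finset.disjoint_left.mpr
      intro f hfa hfb
      exact hab (((hFmem a f).mp hfa).2.symm.trans ((hFmem b f).mp hfb).2)
    have step1 : ∑ a ∈ Finset.range N,
        ‖Bdz F d z a‖ * (Fintype.card F : ℝ) ^ (-(σ * (a:ℝ)))
          ≤ ∑ f ∈ U, ‖bdzf d z f‖ * x ^ f.natDegree := by
      have h1 : ∀ a ∈ Finset.range N,
          ‖Bdz F d z a‖ * (Fintype.card F : ℝ) ^ (-(σ * (a:ℝ)))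
            ≤ ∑ f ∈ Ffin a, ‖bdzf d z f‖ * x ^ a := by
        intro a _
        rw [hxa, ← Finset.sum_mul]
        exact mul_le_mul_of_nonneg_right (habs a) (pow_nonneg hxpos.le a)
      apply (Finset.sum_le_sum h1).trans
      have h2 : ∑ f ∈ U, ‖bdzf d z f‖ * x ^ f.natDegree
          = ∑ a ∈ Finset.range N, ∑ f ∈ Ffin a, ‖bdzf d z f‖ * x ^ a := by
        rw [hUdef, Finset.sum_biUnion hdisj]
        apply Finset.sum_congr rfl
        intro a _
        apply Finset.sum_congr rfl
        intro f hf
        rw [((hFmem a f).mp hf).2]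
      rw [h2]
    -- structural facts about factors
    have hsupp : ∀ f ∈ U, (normalizedFactors f).toFinset ⊆ P := by
      intro f hf p hp
      rw [Multiset.mem_toFinset] at hp
      obtain ⟨hfm, hfd⟩ := (hUmem f).mp hf
      rw [hPmem]
      refine ⟨monic_of_mem_nf hp, ?_, irreducible_of_normalized_factor p hp⟩
      exact le_trans (Polynomial.natDegree_le_of_dvd (dvd_of_mem_normalizedFactors hp)
        hfm.ne_zero) (by omega)
    have hdeg_sum : ∀ f ∈ U, f.natDegree
        = ∑ p ∈ P, Multiset.count p (normalizedFactors f) * p.natDegree := by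
      intro f hf
      obtain ⟨hfm, _⟩ := (hUmem f).mp hf
      conv_lhs => rw [← nf_prod_eq hfm]
      rw [Polynomial.natDegree_multiset_prod_of_monic _ (fun p hp => monic_of_mem_nf hp)]
      have h1 : ((normalizedFactors f).map Polynomial.natDegree).sum
          = ∑ p ∈ (normalizedFactors f).toFinset,
              Multiset.count p (normalizedFactors f) * p.natDegree := by
        rw [Finset.sum_multiset_map_count]
        apply Finset.sum_congr rfl
        intro p _
        rw [smul_eq_mul]
      rw [h1]
      exact Finset.sum_subset (hsupp f hf) (fun p _ hp => by
        rw [Multiset.count_eq_zero_of_notMem (fun hm => hp (Multiset.mem_toFinset.mpr hm)),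
          zero_mul])
    have hcnt : ∀ f ∈ U, ∀ p ∈ P, Multiset.count p (normalizedFactors f) ≤ N := by
      intro f hf p hp
      by_cases hmem : p ∈ (normalizedFactors f).toFinset
      · have h1 : Multiset.count p (normalizedFactors f) * p.natDegree ≤ f.natDegree := by
          rw [hdeg_sum f hf]
          exact Finset.single_le_sum (f := fun q => Multiset.count q (normalizedFactors f) * q.natDegree) (fun q _ => Nat.zero_le _) hp
        have h2 : 1 ≤ p.natDegree := hdegpos p (((hPmem p).mp hp).2.2)
        have h3 := ((hUmem f).mp hf).2
        have h4 : Multiset.count p (normalizedFactors f)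
            ≤ Multiset.count p (normalizedFactors f) * p.natDegree :=
          Nat.le_mul_of_pos_right _ (by omega)
        omega
      · rw [Multiset.count_eq_zero_of_notMem (fun hm => hmem (Multiset.mem_toFinset.mpr hm))]
        exact Nat.zero_le N
    -- per-f identity
    have hGf : ∀ f ∈ U, ‖bdzf d z f‖ * x ^ f.natDegree
        = ∏ p ∈ P, w p (Multiset.count p (normalizedFactors f)) := by
      intro f hf
      have habs_prod : ‖bdzf d z f‖
          = ∏ p ∈ P, ‖bdcoef d z p (Multiset.count p (normalizedFactors f))‖ := by
        unfold bdzf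
        rw [norm_prod]
        exact Finset.prod_subset (hsupp f hf) (fun p _ hp => by
          rw [Multiset.count_eq_zero_of_notMem (fun hm => hp (Multiset.mem_toFinset.mpr hm)),
            bdcoef_zero_eq, norm_one])
      have hpow : x ^ f.natDegree
          = ∏ p ∈ P, x ^ (Multiset.count p (normalizedFactors f) * p.natDegree) := by
        rw [hdeg_sum f hf]
        exact (Finset.prod_pow_eq_pow_sum _ _ _).symm
      rw [habs_prod, hpow, ← Finset.prod_mul_distrib]
    have step2 : ∑ f ∈ U, ‖bdzf d z f‖ * x ^ f.natDegree
        ≤ ∏ p ∈ P, ∑ k ∈ Finset.range (N+1), w p k := by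
      rw [Finset.sum_congr rfl hGf]
      exact key_expand U P w hwnn N hcnt hsupp (fun f hf => ((hUmem f).mp hf).1)
    -- local factor bounds
    have hWnn : ∀ p : Polynomial F, 0 ≤ ∑ k ∈ Finset.range (N+1), w p k :=
      fun p => Finset.sum_nonneg fun k _ => hwnn p k
    have hbound_dvd : ∀ p ∈ P, p ∣ d →
        ∑ k ∈ Finset.range (N+1), w p k ≤ (1 - x ^ p.natDegree) ^ (-A) := by
      intro p hp hpd
      have hdp : 1 ≤ p.natDegree := hdegpos p (((hPmem p).mp hp).2.2)
      have htp1 : x ^ p.natDegree < 1 := hxd1 _ hdp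
      have htp0 : (0:ℝ) ≤ x ^ p.natDegree := pow_nonneg hxpos.le _
      calc ∑ k ∈ Finset.range (N+1), w p k
          ≤ ∑ k ∈ Finset.range (N+1), rb A k * (x ^ p.natDegree) ^ k := by
            apply Finset.sum_le_sum
            intro k _
            rw [hwdef]
            simp only
            rw [show x ^ (k * p.natDegree) = (x ^ p.natDegree) ^ k by
              rw [← pow_mul, mul_comm]]
            apply mul_le_mul_of_nonneg_right ?_ (pow_nonneg htp0 k)
            have heq : ‖bdcoef d z p k‖ = ‖cbinom z k‖ := by
              unfold bdcoef
              rw [if_pos hpd, norm_mul, norm_pow]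
              simp
            rw [heq]
            exact abs_cbinom_le hA0 hz k
        _ ≤ (1 - x ^ p.natDegree) ^ (-A) := BIN hA.le htp0 htp1 (N+1)
    have hbound_ndvd : ∀ p ∈ P, ¬ p ∣ d →
        ∑ k ∈ Finset.range (N+1), w p k ≤ Real.exp (EA * x ^ (2 * p.natDegree)) := by
      intro p hp hpd
      have hdp : 1 ≤ p.natDegree := hdegpos p (((hPmem p).mp hp).2.2)
      set t : ℝ := x ^ p.natDegree with htdef
      have ht0' : (0:ℝ) ≤ t := pow_nonneg hxpos.le _
      have htt0 : t ≤ t0 := by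
        calc t ≤ x ^ 1 := pow_le_pow_of_le_one hxpos.le hx1 hdp
          _ = x := pow_one x
          _ ≤ t0 := hxt0
      have hwk : ∀ k : ℕ, w p k = ‖bcoef z k‖ * t ^ k := by
        intro k
        rw [hwdef]
        simp only
        rw [show x ^ (k * p.natDegree) = t ^ k by rw [htdef, ← pow_mul, mul_comm]]
        congr 1
        unfold bdcoef
        rw [if_neg hpd]
      have hsum1 : ∑ k ∈ Finset.range (N+1), w p k ≤ 1 + EA * t ^ 2 := by
        rw [Finset.sum_range_succ' (fun k => w p k) N]
        have hw0 : w p 0 = 1 := by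
          rw [hwk 0, bcoef_zero, norm_one, pow_zero, mul_one]
        have hterm : ∀ k ∈ Finset.range N,
            w p (k+1) ≤ ((A+1) * (t^2/t0^2)) * (rb A (k+1) * t0 ^ (k+1)) := by
          intro k _
          rcases k with _ | j
          · rw [hwk 1, bcoef_one, norm_zero, zero_mul]
            have : (0:ℝ) ≤ rb A 1 * t0 ^ 1 := mul_nonneg (rb_nonneg hA0 1) (by positivity)
            positivity
          · rw [hwk (j+2)]
            have h1 : ‖bcoef z (j+2)‖ ≤ (A+1) * rb A (j+2) :=
              abs_bcoef_le hA.le hz j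
            have h2 : t ^ (j + 2) ≤ (t^2/t0^2) * t0 ^ (j+2) := by
              have e1 : (t^2/t0^2) * t0 ^ (j+2) = t^2 * t0^j := by
                rw [pow_add]
                field_simp
              have e2 : t ^ (j+2) = t^2 * t^j := by
                rw [pow_add]
                ring
              rw [e1, e2]
              exact mul_le_mul_of_nonneg_left (pow_le_pow_left₀ ht0' htt0 j) (by positivity)
            calc ‖bcoef z (j+2)‖ * t ^ (j+2)
                ≤ ((A+1) * rb A (j+2)) * ((t^2/t0^2) * t0 ^ (j+2)) := by
                  apply mul_le_mul h1 h2 (pow_nonneg ht0' _)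
                  exact mul_nonneg (by linarith) (rb_nonneg hA0 _)
              _ = ((A+1) * (t^2/t0^2)) * (rb A (j+2) * t0 ^ (j+2)) := by ring
        calc (∑ k ∈ Finset.range N, w p (k+1)) + w p 0
            ≤ (∑ k ∈ Finset.range N, ((A+1) * (t^2/t0^2)) * (rb A (k+1) * t0 ^ (k+1))) + 1 := by
              rw [hw0]
              exact add_le_add_left (Finset.sum_le_sum hterm) 1
          _ ≤ ((A+1) * (t^2/t0^2)) * (∑ k ∈ Finset.range (N+1), rb A k * t0 ^ k) + 1 := by
              rw [← Finset.mul_sum]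
              apply add_le_add_left
              apply mul_le_mul_of_nonneg_left ?_ (by positivity)
              rw [Finset.sum_range_succ' (fun k => rb A k * t0 ^ k) N]
              have : (0:ℝ) ≤ rb A 0 * t0 ^ 0 := mul_nonneg (rb_nonneg hA0 0) (by positivity)
              linarith
          _ ≤ ((A+1) * (t^2/t0^2)) * (1 - t0) ^ (-A) + 1 := by
              apply add_le_add_left
              exact mul_le_mul_of_nonneg_left (BIN hA.le ht0pos.le ht0lt1 (N+1)) (by positivity)
          _ = 1 + EA * t^2 := by
              rw [hEAdef]
              field_simp
              ring
      calc ∑ k ∈ Finset.range (N+1), w p k ≤ 1 + EA * t ^ 2 := hsum1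
        _ ≤ Real.exp (EA * t^2) := by
            have := Real.add_one_le_exp (EA * t^2)
            linarith
        _ = Real.exp (EA * x ^ (2 * p.natDegree)) := by
            rw [htdef, ← pow_mul, mul_comm p.natDegree 2]
    -- sum over P of x^{2 deg}
    have hsum_deg : ∑ p ∈ P, x ^ (2 * p.natDegree) ≤ c1 := by
      have hqx : (Fintype.card F : ℝ) * x ^ 2 ≤ r0 := by
        have hx2 : x ^ 2 = (Fintype.card F : ℝ) ^ ((-σ) * 2) := by
          rw [hxdef, ← Real.rpow_natCast ((Fintype.card F : ℝ) ^ (-σ)) 2, ← Real.rpow_mul hq0]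
          norm_num
        calc (Fintype.card F : ℝ) * x ^ 2
            = (Fintype.card F : ℝ) ^ (1 + (-σ) * 2 : ℝ) := by
              rw [hx2, Real.rpow_add hqpos, Real.rpow_one]
          _ ≤ (Fintype.card F : ℝ) ^ (-(1/3 : ℝ)) :=
              Real.rpow_le_rpow_of_exponent_le hq1 (by linarith)
          _ ≤ r0 := hbase _ (by norm_num)
      have hmaps : ∀ p ∈ P, p.natDegree ∈ Finset.range (N+1) :=
        fun p hp => Finset.mem_range.mpr (Nat.lt_succ_of_le ((hPmem p).mp hp).2.1)
      rw [← Finset.sum_fiberwise_of_maps_to hmaps (fun p => x ^ (2 * p.natDegree))]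
      have hinner : ∀ n ∈ Finset.range (N+1),
          ∑ p ∈ P.filter (fun p => p.natDegree = n), x ^ (2 * p.natDegree) ≤ r0 ^ n := by
        intro n _
        have hconst : ∑ p ∈ P.filter (fun p => p.natDegree = n), x ^ (2 * p.natDegree)
            = ((P.filter (fun p => p.natDegree = n)).card : ℝ) * x ^ (2 * n) := by
          rw [Finset.sum_congr rfl (fun p hp => by rw [(Finset.mem_filter.mp hp).2]),
            Finset.sum_const, nsmul_eq_mul]
        rw [hconst]
        have hsubn : P.filter (fun p => p.natDegree = n) ⊆ Ffin n := by
          intro p hp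
          obtain ⟨hpP, hpn⟩ := Finset.mem_filter.mp hp
          exact (hFmem n p).mpr ⟨((hPmem p).mp hpP).1, hpn⟩
        have hcard : ((P.filter (fun p => p.natDegree = n)).card : ℝ)
            ≤ ((Fintype.card F : ℕ) : ℝ) ^ n := by
          have h := le_trans (Finset.card_le_card hsubn) (MS_card_le F n)
          exact_mod_cast h
        calc ((P.filter (fun p => p.natDegree = n)).card : ℝ) * x ^ (2 * n)
            ≤ ((Fintype.card F : ℕ) : ℝ) ^ n * x ^ (2 * n) :=
              mul_le_mul_of_nonneg_right hcard (pow_nonneg hxpos.le _)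
          _ = ((Fintype.card F : ℝ) * x ^ 2) ^ n := by
              rw [mul_pow, ← pow_mul]
          _ ≤ r0 ^ n := pow_le_pow_left₀ (by positivity) hqx n
      calc ∑ n ∈ Finset.range (N+1), ∑ p ∈ P.filter (fun p => p.natDegree = n),
              x ^ (2 * p.natDegree)
          ≤ ∑ n ∈ Finset.range (N+1), r0 ^ n := Finset.sum_le_sum hinner
        _ ≤ c1 := by
            rw [hc1def]
            have hsummable : Summable (fun n : ℕ => r0 ^ n) :=
              summable_geometric_of_lt_one hr0pos.le hr0lt1
            have h := Summable.sum_le_tsum (Finset.range (N+1))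
              (fun i _ => pow_nonneg hr0pos.le i) hsummable
            rwa [tsum_geometric_of_lt_one hr0pos.le hr0lt1] at h
    -- combine product bounds
    have hsubdvd : P.filter (fun p => p ∣ d) ⊆ (normalizedFactors d).toFinset := by
      intro p hp
      obtain ⟨hpP, hpd⟩ := Finset.mem_filter.mp hp
      obtain ⟨hm, _, hirr⟩ := (hPmem p).mp hpP
      exact Multiset.mem_toFinset.mpr (mem_nf_of_dvd hdne hm hirr hpd)
    have h1 : ∏ p ∈ P.filter (fun p => p ∣ d), (∑ k ∈ Finset.range (N+1), w p k) ≤ Pd := by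
      calc ∏ p ∈ P.filter (fun p => p ∣ d), (∑ k ∈ Finset.range (N+1), w p k)
          ≤ ∏ p ∈ P.filter (fun p => p ∣ d), (1 - x ^ p.natDegree) ^ (-A) :=
            Finset.prod_le_prod (fun p _ => hWnn p)
              (fun p hp => hbound_dvd p (Finset.mem_filter.mp hp).1 (Finset.mem_filter.mp hp).2)
        _ ≤ ∏ p ∈ (normalizedFactors d).toFinset, (1 - x ^ p.natDegree) ^ (-A) := by
            have hfac1 : ∀ p ∈ (normalizedFactors d).toFinset,
                (1:ℝ) ≤ (1 - x ^ p.natDegree) ^ (-A) := by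
              intro p hp
              have hdp : 1 ≤ p.natDegree :=
                hdegpos p (irreducible_of_normalized_factor p (Multiset.mem_toFinset.mp hp))
              exact Real.one_le_rpow_of_pos_of_le_one_of_nonpos
                (by linarith [hxd1 _ hdp]) (by linarith [pow_nonneg hxpos.le p.natDegree])
                (by linarith)
            have hge1 : (1:ℝ) ≤ ∏ p ∈ (normalizedFactors d).toFinset \ P.filter (fun p => p ∣ d),
                (1 - x ^ p.natDegree) ^ (-A) := by
              calc (1:ℝ) = ∏ p ∈ (normalizedFactors d).toFinset \ P.filter (fun p => p ∣ d),
                    (1:ℝ) := Finset.prod_const_one.symm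
                _ ≤ _ := Finset.prod_le_prod (fun _ _ => zero_le_one)
                    (fun p hp => hfac1 p (Finset.mem_sdiff.mp hp).1)
            rw [← Finset.prod_sdiff hsubdvd]
            apply le_mul_of_one_le_left ?_ hge1
            apply Finset.prod_nonneg
            intro p _
            apply Real.rpow_nonneg
            have := pow_le_one₀ hxpos.le hx1 (n := p.natDegree)
            linarith
        _ = Pd := by
            rw [hPddef]
            exact (Finset.prod_congr rfl hPdfac).symm
    have h2 : ∏ p ∈ P.filter (fun p => ¬ p ∣ d), (∑ k ∈ Finset.range (N+1), w p k)
        ≤ Real.exp (EA * c1) := by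
      calc ∏ p ∈ P.filter (fun p => ¬ p ∣ d), (∑ k ∈ Finset.range (N+1), w p k)
          ≤ ∏ p ∈ P.filter (fun p => ¬ p ∣ d), Real.exp (EA * x ^ (2 * p.natDegree)) :=
            Finset.prod_le_prod (fun p _ => hWnn p)
              (fun p hp => hbound_ndvd p (Finset.mem_filter.mp hp).1 (Finset.mem_filter.mp hp).2)
        _ = Real.exp (∑ p ∈ P.filter (fun p => ¬ p ∣ d), EA * x ^ (2 * p.natDegree)) :=
            (Real.exp_sum _ _).symm
        _ ≤ Real.exp (EA * c1) := by
            apply Real.exp_le_exp.mpr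
            calc ∑ p ∈ P.filter (fun p => ¬ p ∣ d), EA * x ^ (2 * p.natDegree)
                ≤ ∑ p ∈ P, EA * x ^ (2 * p.natDegree) :=
                  Finset.sum_le_sum_of_subset_of_nonneg (Finset.filter_subset _ _)
                    (fun p _ _ => mul_nonneg hEApos (pow_nonneg hxpos.le _))
              _ = EA * ∑ p ∈ P, x ^ (2 * p.natDegree) := by rw [Finset.mul_sum]
              _ ≤ EA * c1 := mul_le_mul_of_nonneg_left hsum_deg hEApos
    calc ∑ a ∈ Finset.range N,
        ‖Bdz F d z a‖ * (Fintype.card F : ℝ) ^ (-(σ * (a:ℝ)))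
        ≤ ∑ f ∈ U, ‖bdzf d z f‖ * x ^ f.natDegree := step1
      _ ≤ ∏ p ∈ P, ∑ k ∈ Finset.range (N+1), w p k := step2
      _ = (∏ p ∈ P.filter (fun p => p ∣ d), (∑ k ∈ Finset.range (N+1), w p k))
          * ∏ p ∈ P.filter (fun p => ¬ p ∣ d), (∑ k ∈ Finset.range (N+1), w p k) :=
          (Finset.prod_filter_mul_prod_filter_not P _ _).symm
      _ ≤ Pd * Real.exp (EA * c1) := by
          apply mul_le_mul h1 h2 (Finset.prod_nonneg fun p _ => hWnn p) hPdnn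
      _ = Real.exp (EA * c1) * Pd := mul_comm _ _
  have hnn : ∀ a : ℕ, 0 ≤ ‖Bdz F d z a‖ * (Fintype.card F : ℝ) ^ (-(σ * (a:ℝ))) :=
    fun a => mul_nonneg (norm_nonneg _) (Real.rpow_nonneg hq0 _)
  exact ⟨summable_of_sum_range_le hnn main, Real.tsum_le_of_sum_range_le hnn main⟩
end
end

section
/- Let q be a prime power and let d ∈ 𝔽_q[X] have degree m ≥ 1. Then for every real σ with 1/2 < σ ≤ 1, ∏_{p∈ℐ, p∣d} (1 − q^{−σ·deg p})^{−1} ≤ (2 + 2·log m)^{8·(qm)^{1−σ}}. -/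
open Polynomial UniqueFactorizationMonoid
open scoped Classical
noncomputable section

lemma aux_dvd {F : Type} [Field F] [Fintype F] {p : F[X]} (hp : Irreducible p) (hmon : p.Monic) :
    p ∣ X ^ (Fintype.card F) ^ p.natDegree - X := by
  have hfact := Fact.mk hp
  have hp0 : p ≠ 0 := hp.ne_zero
  let pb := AdjoinRoot.powerBasis hp0
  haveI : Fintype (AdjoinRoot p) := Module.fintypeOfFintype pb.basis
  have hcard : Fintype.card (AdjoinRoot p) = (Fintype.card F) ^ p.natDegree := by
    rw [Module.card_fintype pb.basis, Fintype.card_fin]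
    congr 1
  have hroot : (Polynomial.aeval (AdjoinRoot.root p)) ((X ^ (Fintype.card F) ^ p.natDegree - X : F[X])) = 0 := by
    rw [map_sub, aeval_X_pow, aeval_X, ← hcard, FiniteField.pow_card, sub_self]
  have hdvd := minpoly.dvd F (AdjoinRoot.root p) hroot
  rwa [AdjoinRoot.minpoly_root hp0, hmon.leadingCoeff, inv_one, C_1, mul_one] at hdvd

lemma aux_count {F : Type} [Field F] [Fintype F] (T : Finset F[X])
    (hT : ∀ p ∈ T, Irreducible p ∧ p.Monic)
    (hcop : (T : Set F[X]).Pairwise (IsCoprime ·  ·))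
    (k : ℕ) (hk : k ≠ 0) (hdeg : ∀ p ∈ T, p.natDegree = k) :
    k * T.card ≤ (Fintype.card F) ^ k := by
  have hq1 : 1 < Fintype.card F := Fintype.one_lt_card
  have hdvd : (∏ p ∈ T, p) ∣ (X ^ (Fintype.card F) ^ k - X : F[X]) := by
    refine Finset.prod_dvd_of_coprime hcop fun p hp => ?_
    have := aux_dvd (hT p hp).1 (hT p hp).2
    rwa [hdeg p hp] at this
  have hne : (X ^ (Fintype.card F) ^ k - X : F[X]) ≠ 0 :=
    FiniteField.X_pow_card_pow_sub_X_ne_zero F hk hq1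
  have h1 := Polynomial.natDegree_le_of_dvd hdvd hne
  rw [Polynomial.natDegree_prod _ _ (fun p hp => (hT p hp).1.ne_zero),
    Finset.sum_congr rfl hdeg, Finset.sum_const, smul_eq_mul,
    FiniteField.X_pow_card_pow_sub_X_natDegree_eq F hk hq1] at h1
  rw [mul_comm]
  simpa using h1

lemma aux_factor {x : ℝ} (h0 : 0 ≤ x) (h1 : x ≤ 17/24) : (1-x)⁻¹ ≤ Real.exp ((24/7)*x) := by
  have hpos : (0:ℝ) < 1 - x := by linarith
  have hinv : (0:ℝ) < (1-x)⁻¹ := by positivity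
  rw [← Real.exp_log hinv]
  apply Real.exp_le_exp.mpr
  have hlog := Real.log_le_sub_one_of_pos hinv
  have heq : (1-x)⁻¹ - 1 = x / (1-x) := by field_simp; ring
  rw [heq] at hlog
  refine hlog.trans ?_
  rw [div_le_iff₀ hpos]
  nlinarith

lemma aux_HK (K m : ℕ) (hK : 1 ≤ K) (hm : 1 ≤ m) (hKm : 2 ^ (K-1) ≤ m) :
    (harmonic K : ℝ) + 1/2 ≤ (7/3) * Real.log (2 + 2*Real.log m) := by
  have hlog2 : (0.6931471803:ℝ) < Real.log 2 := Real.log_two_gt_d9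
  have hm0 : (0:ℝ) < (m:ℝ) := by exact_mod_cast hm
  have hlogm0 : 0 ≤ Real.log m := Real.log_nonneg (by exact_mod_cast hm)
  have hb0 : (0:ℝ) < 2 + 2*Real.log m := by linarith
  match K, hK with
  | 1, _ =>
    have h1 : (harmonic 1 : ℝ) = 1 := by norm_num [harmonic_succ, harmonic_zero]
    have h2 : Real.log 2 ≤ Real.log (2 + 2*Real.log m) :=
      Real.log_le_log (by norm_num) (by linarith)
    rw [h1]; linarith
  | 2, _ =>
    have h1 : (harmonic 2 : ℝ) = 3/2 := by norm_num [harmonic_succ, harmonic_zero]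
    have hm2 : (2:ℝ) ≤ (m:ℝ) := by exact_mod_cast hKm
    have hlm : Real.log 2 ≤ Real.log m := Real.log_le_log (by norm_num) hm2
    have he : Real.exp 1 ≤ 2 + 2*Real.log m := by
      have := Real.exp_one_lt_d9
      linarith
    have h2 : (1:ℝ) ≤ Real.log (2 + 2*Real.log m) := by
      rw [Real.le_log_iff_exp_le hb0]
      simpa using he
    rw [h1]; linarith
  | (n+3), _ =>
    set K := n + 3 with hKdef
    have hK3 : 3 ≤ K := by omega
    have h1 : (harmonic K : ℝ) ≤ 1 + Real.log K := harmonic_le_one_add_log K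
    have h2 : ((K:ℝ)-1) * Real.log 2 ≤ Real.log m := by
      have : Real.log (2^(K-1)) ≤ Real.log m :=
        Real.log_le_log (by positivity) (by exact_mod_cast hKm)
      rw [Real.log_pow] at this
      have hc : ((K-1 : ℕ):ℝ) = (K:ℝ) - 1 := by
        have : 1 ≤ K := by omega
        push_cast [this]; ring
      rw [hc] at this
      exact this
    have h3 : (K:ℝ) + 1 ≤ 2 + 2*Real.log m := by nlinarith [hK3]
    have h4 : Real.log ((K:ℝ)+1) ≤ Real.log (2 + 2*Real.log m) :=
      Real.log_le_log (by positivity) h3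
    have h5 : Real.log (K:ℝ) ≤ Real.log ((K:ℝ)+1) :=
      Real.log_le_log (by positivity) (by linarith)
    have h6 : Real.log 4 ≤ Real.log ((K:ℝ)+1) := by
      apply Real.log_le_log (by norm_num)
      have : (3:ℝ) ≤ (K:ℝ) := by exact_mod_cast hK3
      linarith
    have h7 : Real.log 4 = 2 * Real.log 2 := by
      rw [show (4:ℝ) = 2^2 by norm_num, Real.log_pow]; push_cast; ring
    linarith

set_option maxHeartbeats 1600000

/-- Lemma 3.7: `∏_{p ∣ d} (1 - q^{-σ·deg p})⁻¹ ≤ (2 + 2·log m)^{8·(qm)^{1-σ}}`, the product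
running over the distinct monic irreducible divisors of `d`. -/
theorem prime_divisor_product_bound :
    ∀ (F : Type) [Field F] [Fintype F], ∀ d : Polynomial F, 1 ≤ d.natDegree →
      ∀ σ : ℝ, 1 / 2 < σ → σ ≤ 1 →
        (∏ p ∈ (normalizedFactors d).toFinset,
            (1 - (Fintype.card F : ℝ) ^ (-(σ * (p.natDegree : ℝ))))⁻¹) ≤
          (2 + 2 * Real.log (d.natDegree : ℝ)) ^
            (8 * ((Fintype.card F : ℝ) * (d.natDegree : ℝ)) ^ (1 - σ)) := by
  intro F _ _ d hm1 σ hσ1 hσ2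
  have hσ0 : 0 < σ := by linarith
  set q : ℕ := Fintype.card F with hqdef
  have hq2 : 2 ≤ q := Fintype.one_lt_card
  set m : ℕ := d.natDegree with hmdef
  have hd0 : d ≠ 0 := fun h => by simp [hmdef, h] at hm1
  set T : Finset (Polynomial F) := (normalizedFactors d).toFinset with hTdef
  -- basic facts about members of T
  have hmem : ∀ p ∈ T, Irreducible p ∧ p.Monic ∧ 1 ≤ p.natDegree := by
    intro p hp
    have hp' := Multiset.mem_toFinset.mp hp
    have hirr : Irreducible p := irreducible_of_normalized_factor p hp'
    have hnorm : normalize p = p := normalize_normalized_factor p hp'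
    have hmon : p.Monic := hnorm ▸ Polynomial.monic_normalize hirr.ne_zero
    refine ⟨hirr, hmon, ?_⟩
    by_contra h
    push_neg at h
    have h0 : p.natDegree = 0 := by omega
    exact hirr.not_isUnit ((Polynomial.Monic.natDegree_eq_zero hmon |>.mp h0) ▸ isUnit_one)
  have hcop : (T : Set (Polynomial F)).Pairwise (IsCoprime · ·) := by
    intro p hp r hr hne
    have hp' := Multiset.mem_toFinset.mp (Finset.mem_coe.mp hp)
    have hr' := Multiset.mem_toFinset.mp (Finset.mem_coe.mp hr)
    refine (irreducible_of_normalized_factor p hp').coprime_iff_not_dvd.mpr ?_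
    intro hdvd
    refine hne ?_
    have hass := (irreducible_of_normalized_factor p hp').associated_of_dvd
      (irreducible_of_normalized_factor r hr') hdvd
    rw [← normalize_normalized_factor p hp', ← normalize_normalized_factor r hr']
    exact normalize_eq_normalize hdvd hass.symm.dvd
  -- sum of degrees bounded by m
  have hsumdeg : ∑ p ∈ T, p.natDegree ≤ m := by
    have h1 : T.prod id ∣ d :=
      (Multiset.toFinset_prod_dvd_prod _).trans (prod_normalizedFactors hd0).dvd
    have h2 := Polynomial.natDegree_le_of_dvd h1 hd0
    have h3 := Polynomial.natDegree_prod T id (fun p hp => (hmem p hp).1.ne_zero)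
    simp only [id] at h2 h3
    rwa [h3] at h2
  -- counting bound
  have hcount : ∀ k : ℕ, k ≠ 0 →
      k * (T.filter (fun p => p.natDegree = k)).card ≤ q ^ k := by
    intro k hk
    refine aux_count _ (fun p hp => ⟨(hmem p (Finset.mem_filter.mp hp).1).1,
      (hmem p (Finset.mem_filter.mp hp).1).2.1⟩) ?_ k hk
      (fun p hp => (Finset.mem_filter.mp hp).2)
    exact hcop.mono (by exact_mod_cast Finset.filter_subset _ _)
  -- real setup
  set Q : ℝ := (q : ℝ) with hQdef
  have hQ2 : (2:ℝ) ≤ Q := by rw [hQdef]; exact_mod_cast hq2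
  have hQ0 : (0:ℝ) < Q := by linarith
  have hQ1 : (1:ℝ) ≤ Q := by linarith
  have hm0 : (0:ℝ) < (m:ℝ) := by exact_mod_cast hm1
  have hm0' : (1:ℝ) ≤ (m:ℝ) := by exact_mod_cast hm1
  have h1σ : 0 ≤ 1 - σ := by linarith
  set x : Polynomial F → ℝ := fun p => Q ^ (-(σ * (p.natDegree : ℝ))) with hxdef
  have hx_nonneg : ∀ p, 0 ≤ x p := fun p => Real.rpow_nonneg hQ0.le _
  have hx_le : ∀ p ∈ T, x p ≤ 17/24 := by
    intro p hp
    have hdegR : (1:ℝ) ≤ (p.natDegree : ℝ) := by exact_mod_cast (hmem p hp).2.2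
    have h1 : x p ≤ Q ^ (-(1/2) : ℝ) := by
      apply Real.rpow_le_rpow_of_exponent_le hQ1
      nlinarith
    have h2 : Q ^ (-(1/2):ℝ) ≤ (2:ℝ) ^ (-(1/2):ℝ) := by
      rw [Real.rpow_neg hQ0.le, Real.rpow_neg (by norm_num : (0:ℝ) ≤ 2)]
      exact inv_anti₀ (by positivity)
        (Real.rpow_le_rpow (by norm_num) hQ2 (by norm_num))
    have h3 : (2:ℝ) ^ (-(1/2):ℝ) ≤ 17/24 := by
      rw [Real.rpow_neg (by norm_num : (0:ℝ) ≤ 2), show ((1:ℝ)/2) = (1/2:ℝ) from rfl,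
        ← Real.sqrt_eq_rpow]
      have hs := Real.sq_sqrt (by norm_num : (0:ℝ) ≤ 2)
      have hs0 := Real.sqrt_nonneg 2
      have h24 : (24/17:ℝ) ≤ Real.sqrt 2 := by nlinarith
      calc (Real.sqrt 2)⁻¹ ≤ ((24:ℝ)/17)⁻¹ := inv_anti₀ (by norm_num) h24
        _ = 17/24 := by norm_num
    exact h1.trans (h2.trans h3)
  have hfac_pos : ∀ p ∈ T, (0:ℝ) < 1 - x p := fun p hp => by
    have := hx_le p hp; linarith
  have hstep1 : (∏ p ∈ T, (1 - x p)⁻¹) ≤ Real.exp ((24/7) * ∑ p ∈ T, x p) := by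
    calc (∏ p ∈ T, (1 - x p)⁻¹) ≤ ∏ p ∈ T, Real.exp ((24/7) * x p) :=
        Finset.prod_le_prod (fun p hp => inv_nonneg.mpr (hfac_pos p hp).le)
          (fun p hp => aux_factor (hx_nonneg p) (hx_le p hp))
      _ = Real.exp (∑ p ∈ T, (24/7) * x p) := (Real.exp_sum _ _).symm
      _ = Real.exp ((24/7) * ∑ p ∈ T, x p) := by rw [← Finset.mul_sum]
  -- the threshold K
  set K : ℕ := max 1 (Nat.clog q m) with hKdef
  have hK1 : 1 ≤ K := le_max_left _ _
  have hmK : m ≤ q ^ K :=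
    (Nat.le_pow_clog hq2 m).trans (Nat.pow_le_pow_right (by omega) (le_max_right _ _))
  have hKm : q ^ (K - 1) ≤ m := by
    by_cases hc : Nat.clog q m ≤ 1
    · have hK1' : K = 1 := by omega
      simpa [hK1'] using hm1
    · push_neg at hc
      have hKeq : K = Nat.clog q m := by omega
      have hm2 : 1 < m := by
        by_contra hm2
        have hmeq : m = 1 := by omega
        rw [hmeq, Nat.clog_one_right] at hc; omega
      have := Nat.pow_pred_clog_lt_self hq2 hm2
      rw [← hKeq] at this
      simpa [Nat.pred_eq_sub_one] using this.le
  have hKm2 : 2 ^ (K-1) ≤ m := le_trans (Nat.pow_le_pow_left hq2 _) hKm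
  have hqKm : q ^ K ≤ q * m := by
    have h := mul_le_mul_left hKm q
    rwa [← pow_succ, Nat.sub_add_cancel hK1, mul_comm m q] at h
  set A : ℝ := (Q * (m:ℝ)) ^ (1 - σ) with hAdef
  have hA0 : 0 ≤ A := Real.rpow_nonneg (by positivity) _
  have hQK_le : (Q:ℝ) ^ (K:ℕ) ≤ Q * (m:ℝ) := by rw [hQdef]; exact_mod_cast hqKm
  have hmQK : (m:ℝ) ≤ Q ^ (K:ℕ) := by rw [hQdef]; exact_mod_cast hmK
  have hQKA : ((Q:ℝ) ^ (K:ℕ)) ^ (1-σ) ≤ A := Real.rpow_le_rpow (by positivity) hQK_le h1σ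
  -- splitting
  set Ts := T.filter (fun p => p.natDegree ≤ K) with hTs
  set Tb := T.filter (fun p => ¬ p.natDegree ≤ K) with hTb
  have hsplit : ∑ p ∈ T, x p = ∑ p ∈ Ts, x p + ∑ p ∈ Tb, x p :=
    (Finset.sum_filter_add_sum_filter_not T _ x).symm
  -- small degrees
  have hsmall : ∑ p ∈ Ts, x p ≤ A * ∑ k ∈ Finset.Icc 1 K, (k:ℝ)⁻¹ := by
    have hmap : ∀ p ∈ Ts, p.natDegree ∈ Finset.Icc 1 K := by
      intro p hp
      have hp' := Finset.mem_filter.mp hp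
      exact Finset.mem_Icc.mpr ⟨(hmem p hp'.1).2.2, hp'.2⟩
    rw [← Finset.sum_fiberwise_of_maps_to hmap x, Finset.mul_sum]
    refine Finset.sum_le_sum fun k hk => ?_
    obtain ⟨hk1, hkK⟩ := Finset.mem_Icc.mp hk
    have hkR : (1:ℝ) ≤ (k:ℝ) := by exact_mod_cast hk1
    have hkpos : (0:ℝ) < (k:ℝ) := by linarith
    have hinner : ∑ p ∈ Ts.filter (fun p => p.natDegree = k), x p
        = ((Ts.filter (fun p => p.natDegree = k)).card : ℝ) * Q ^ (-(σ * (k:ℝ))) := by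
      have hcongr : ∀ p ∈ Ts.filter (fun p => p.natDegree = k), x p = Q ^ (-(σ * (k:ℝ))) := by
        intro p hp
        have h := (Finset.mem_filter.mp hp).2
        simp only [hxdef]
        rw [h]
      rw [Finset.sum_congr rfl hcongr, Finset.sum_const, nsmul_eq_mul]
    rw [hinner]
    have hsub : Ts.filter (fun p => p.natDegree = k) ⊆ T.filter (fun p => p.natDegree = k) :=
      fun p hp => Finset.mem_filter.mpr
        ⟨(Finset.mem_filter.mp (Finset.mem_filter.mp hp).1).1, (Finset.mem_filter.mp hp).2⟩
    have hcard : ((Ts.filter (fun p => p.natDegree = k)).card : ℝ) * (k:ℝ) ≤ Q ^ (k:ℕ) := by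
      have h1 : k * (Ts.filter (fun p => p.natDegree = k)).card ≤ q ^ k :=
        le_trans (Nat.mul_le_mul_left k (Finset.card_le_card hsub)) (hcount k (by omega))
      rw [mul_comm] at h1
      rw [hQdef]
      exact_mod_cast h1
    have hck : ((Ts.filter (fun p => p.natDegree = k)).card : ℝ) ≤ Q ^ ((k:ℝ)) * (k:ℝ)⁻¹ := by
      rw [← le_div_iff₀ hkpos] at hcard
      rw [← Real.rpow_natCast Q k] at hcard
      rw [mul_comm (Q ^ ((k:ℝ))) _, ← div_eq_inv_mul]
      exact hcard
    have hxk0 : (0:ℝ) ≤ Q ^ (-(σ * (k:ℝ))) := Real.rpow_nonneg hQ0.le _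
    calc ((Ts.filter (fun p => p.natDegree = k)).card : ℝ) * Q ^ (-(σ * (k:ℝ)))
        ≤ (Q ^ ((k:ℝ)) * (k:ℝ)⁻¹) * Q ^ (-(σ * (k:ℝ))) :=
          mul_le_mul_of_nonneg_right hck hxk0
      _ = Q ^ ((1-σ) * (k:ℝ)) * (k:ℝ)⁻¹ := by
          rw [mul_right_comm, ← Real.rpow_add hQ0,
            show (k:ℝ) + -(σ * (k:ℝ)) = (1-σ) * (k:ℝ) by ring]
      _ ≤ Q ^ ((1-σ) * (K:ℝ)) * (k:ℝ)⁻¹ := by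
          apply mul_le_mul_of_nonneg_right _ (by positivity)
          apply Real.rpow_le_rpow_of_exponent_le hQ1
          have hKk : (k:ℝ) ≤ (K:ℝ) := by exact_mod_cast hkK
          nlinarith
      _ ≤ A * (k:ℝ)⁻¹ := by
          have hQKA' : Q ^ ((1-σ) * (K:ℝ)) ≤ A := by
            rw [show (1-σ) * (K:ℝ) = (K:ℝ) * (1-σ) by ring, Real.rpow_mul hQ0.le,
              Real.rpow_natCast]
            exact hQKA
          exact mul_le_mul_of_nonneg_right hQKA' (by positivity)
  -- big degrees
  have hbig : ∑ p ∈ Tb, x p ≤ A * (1/2) := by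
    have hc0 : (0:ℝ) ≤ Q ^ (-(σ * ((K:ℝ)+1))) := Real.rpow_nonneg hQ0.le _
    have hKpos : (0:ℝ) < (K:ℝ) + 1 := by positivity
    have h1 : ∀ p ∈ Tb, x p ≤ (p.natDegree:ℝ) * (Q ^ (-(σ * ((K:ℝ)+1))) / ((K:ℝ)+1)) := by
      intro p hp
      have hdegK : K + 1 ≤ p.natDegree := by
        have := (Finset.mem_filter.mp hp).2; omega
      have hdegR : (K:ℝ) + 1 ≤ (p.natDegree:ℝ) := by exact_mod_cast hdegK
      have hx1 : x p ≤ Q ^ (-(σ * ((K:ℝ)+1))) := by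
        apply Real.rpow_le_rpow_of_exponent_le hQ1
        nlinarith
      calc x p ≤ Q ^ (-(σ * ((K:ℝ)+1))) := hx1
        _ = 1 * (Q ^ (-(σ * ((K:ℝ)+1)))) := (one_mul _).symm
        _ ≤ ((p.natDegree:ℝ) / ((K:ℝ)+1)) * Q ^ (-(σ * ((K:ℝ)+1))) := by
            apply mul_le_mul_of_nonneg_right _ hc0
            rw [le_div_iff₀ hKpos]; linarith
        _ = (p.natDegree:ℝ) * (Q ^ (-(σ * ((K:ℝ)+1))) / ((K:ℝ)+1)) := by ring
    have h2 : ∑ p ∈ Tb, x p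
        ≤ (∑ p ∈ Tb, (p.natDegree:ℝ)) * (Q ^ (-(σ * ((K:ℝ)+1))) / ((K:ℝ)+1)) := by
      rw [Finset.sum_mul]
      exact Finset.sum_le_sum h1
    have h3 : ∑ p ∈ Tb, (p.natDegree:ℝ) ≤ (m:ℝ) := by
      have h3' : ∑ p ∈ Tb, p.natDegree ≤ m :=
        le_trans (Finset.sum_le_sum_of_subset (Finset.filter_subset _ _)) hsumdeg
      exact_mod_cast h3'
    have h4 : (∑ p ∈ Tb, (p.natDegree:ℝ)) * (Q ^ (-(σ * ((K:ℝ)+1))) / ((K:ℝ)+1))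
        ≤ (m:ℝ) * (Q ^ (-(σ * ((K:ℝ)+1))) / ((K:ℝ)+1)) :=
      mul_le_mul_of_nonneg_right h3 (by positivity)
    have e1 : Q ^ (-(σ * ((K:ℝ)+1))) ≤ Q ^ (-(σ * (K:ℝ))) := by
      apply Real.rpow_le_rpow_of_exponent_le hQ1
      have hK0 : (0:ℝ) ≤ (K:ℝ) := by positivity
      nlinarith
    have e2 : (m:ℝ) * Q ^ (-(σ * (K:ℝ))) ≤ A := by
      have f1 : Q ^ (-(σ * (K:ℝ))) ≤ (m:ℝ) ^ (-σ) := by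
        have g1 : (m:ℝ) ^ σ ≤ (Q ^ (K:ℕ)) ^ σ := Real.rpow_le_rpow hm0.le hmQK hσ0.le
        have g2 : (Q ^ (K:ℕ) : ℝ) ^ σ = Q ^ (σ * (K:ℝ)) := by
          rw [← Real.rpow_natCast Q K, ← Real.rpow_mul hQ0.le, mul_comm]
        have g3 : (0:ℝ) < (m:ℝ) ^ σ := Real.rpow_pos_of_pos hm0 _
        rw [Real.rpow_neg hQ0.le, Real.rpow_neg hm0.le]
        exact inv_anti₀ g3 (by rw [← g2]; exact g1)
      have f2 : (m:ℝ) * (m:ℝ) ^ (-σ) = (m:ℝ) ^ (1-σ) := by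
        nth_rewrite 1 [← Real.rpow_one (m:ℝ)]
        rw [← Real.rpow_add hm0, show (1:ℝ) + -σ = 1 - σ by ring]
      have f3 : (m:ℝ) ^ (1-σ) ≤ A := by
        apply Real.rpow_le_rpow hm0.le _ h1σ
        nlinarith
      calc (m:ℝ) * Q ^ (-(σ * (K:ℝ))) ≤ (m:ℝ) * (m:ℝ) ^ (-σ) :=
            mul_le_mul_of_nonneg_left f1 hm0.le
        _ = (m:ℝ) ^ (1-σ) := f2
        _ ≤ A := f3
    have hK2 : (2:ℝ) ≤ (K:ℝ) + 1 := by
      have : (1:ℝ) ≤ (K:ℝ) := by exact_mod_cast hK1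
      linarith
    have e3 : (m:ℝ) * (Q ^ (-(σ * ((K:ℝ)+1))) / ((K:ℝ)+1))
        ≤ ((m:ℝ) * Q ^ (-(σ * (K:ℝ)))) * (1/2) := by
      have hinv : ((K:ℝ)+1)⁻¹ ≤ 1/2 := by
        rw [inv_le_comm₀ (by linarith) (by norm_num)]
        norm_num
        linarith
      rw [div_eq_mul_inv]
      calc (m:ℝ) * (Q ^ (-(σ * ((K:ℝ)+1))) * ((K:ℝ)+1)⁻¹)
          ≤ (m:ℝ) * (Q ^ (-(σ * ((K:ℝ)+1))) * (1/2)) := by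
            apply mul_le_mul_of_nonneg_left _ hm0.le
            exact mul_le_mul_of_nonneg_left hinv hc0
        _ ≤ (m:ℝ) * (Q ^ (-(σ * (K:ℝ))) * (1/2)) := by
            apply mul_le_mul_of_nonneg_left _ hm0.le
            exact mul_le_mul_of_nonneg_right e1 (by norm_num)
        _ = ((m:ℝ) * Q ^ (-(σ * (K:ℝ)))) * (1/2) := by ring
    calc ∑ p ∈ Tb, x p ≤ _ := h2
      _ ≤ (m:ℝ) * (Q ^ (-(σ * ((K:ℝ)+1))) / ((K:ℝ)+1)) := h4
      _ ≤ ((m:ℝ) * Q ^ (-(σ * (K:ℝ)))) * (1/2) := e3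
      _ ≤ A * (1/2) := mul_le_mul_of_nonneg_right e2 (by norm_num)
  -- assemble
  have hH : ∑ k ∈ Finset.Icc 1 K, (k:ℝ)⁻¹ = (harmonic K : ℝ) := by
    rw [harmonic_eq_sum_Icc]
    push_cast
    ring
  have hHK := aux_HK K m hK1 hm1 hKm2
  have hS : ∑ p ∈ T, x p ≤ A * ((harmonic K:ℝ) + 1/2) := by
    rw [hsplit, mul_add]
    have := hsmall
    rw [hH] at this
    linarith
  have hb0 : (0:ℝ) < 2 + 2*Real.log (m:ℝ) := by
    have := Real.log_nonneg hm0'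
    linarith
  have hSL : ∑ p ∈ T, x p ≤ A * ((7/3) * Real.log (2 + 2*Real.log (m:ℝ))) :=
    hS.trans (mul_le_mul_of_nonneg_left hHK hA0)
  show (∏ p ∈ T, (1 - x p)⁻¹) ≤ (2 + 2 * Real.log (m:ℝ)) ^ (8 * A)
  calc (∏ p ∈ T, (1 - x p)⁻¹) ≤ Real.exp ((24/7) * ∑ p ∈ T, x p) := hstep1
    _ ≤ Real.exp (Real.log (2 + 2*Real.log (m:ℝ)) * (8 * A)) := by
        apply Real.exp_le_exp.mpr
        nlinarith [hSL, hx_nonneg]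
    _ = (2 + 2 * Real.log (m:ℝ)) ^ (8 * A) := (Real.rpow_def_of_pos hb0 _).symm
end
end
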